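/- arXiv:2401.07713 — 10 statements merged into one kernel-verified Lean document; each statement's English description precedes it below -/
import Mathlib

section
/- Let 0 < λ < 1 be real and d ≥ 2 an integer. Then there is exactly one mean-field fixed point q. Moreover this fixed point satisfies q(0) = 1 − λ and, writing q̄ = ∑_{x≥1} x·q(x), it is given explicitly by q(x) = (1−λ)·(dλ)^x / ∏_{ℓ=1}^{x} (1 + λ(d−1)ℓ/q̄) for every x ≥ 1, where q̄ is the unique s ∈ (0,∞) satisfying λ/(1−λ) = ∑_{x≥1} (dλ)^x / ∏_{ℓ=1}^{x} (1 + λ(d−1)ℓ/s). -/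
open scoped BigOperators
open Filter Topology

/-- The mean queue length `q̄ = ∑_{x≥1} x·q(x)`. -/
noncomputable def qbar (q : ℕ → ℝ) : ℝ := ∑' x : ℕ, (x : ℝ) * q x

/-- `q : ℕ → ℝ` is admissible: nonnegative, sums to one, and the mean queue
length is finite and positive. -/
def Admissible (q : ℕ → ℝ) : Prop :=
  (∀ x, 0 ≤ q x) ∧ Summable q ∧ (∑' x, q x = 1) ∧
    Summable (fun x : ℕ => (x : ℝ) * q x) ∧ 0 < qbar q

/-- The mean-field drift `D(x)` for `x ≥ 1`. -/
noncomputable def drift (lam : ℝ) (d : ℕ) (q : ℕ → ℝ) (x : ℕ) : ℝ :=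
  (d : ℝ) * lam * (q (x - 1) - q x) + q (x + 1) - q x +
    (1 - q 0) * ((d : ℝ) - 1) / qbar q *
      (((x : ℝ) + 1) * q (x + 1) - (x : ℝ) * q x)

/-- A mean-field fixed point is an admissible `q` with vanishing drift. -/
def IsMFFixedPoint (lam : ℝ) (d : ℕ) (q : ℕ → ℝ) : Prop :=
  Admissible q ∧ ∀ x : ℕ, 1 ≤ x → drift lam d q x = 0

namespace MFaux

noncomputable def pden (lam : ℝ) (d : ℕ) (s : ℝ) (x : ℕ) : ℝ :=
  ∏ l ∈ Finset.Icc 1 x, (1 + lam * ((d : ℝ) - 1) * (l : ℝ) / s)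

noncomputable def trm (lam : ℝ) (d : ℕ) (s : ℝ) (x : ℕ) : ℝ :=
  ((d : ℝ) * lam) ^ x / pden lam d s x

noncomputable def Phi (lam : ℝ) (d : ℕ) (s : ℝ) : ℝ := ∑' x : ℕ, trm lam d s (x + 1)

variable {lam : ℝ} {d : ℕ} {s s' : ℝ}

lemma hA (hlam0 : 0 < lam) (hd : 2 ≤ d) : 0 < lam * ((d : ℝ) - 1) := by
  have : (2:ℝ) ≤ (d:ℝ) := by exact_mod_cast hd
  nlinarith

lemma hD (hlam0 : 0 < lam) (hd : 2 ≤ d) : 0 < (d : ℝ) * lam := by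
  have : (2:ℝ) ≤ (d:ℝ) := by exact_mod_cast hd
  nlinarith

lemma factor_pos (hlam0 : 0 < lam) (hd : 2 ≤ d) (hs : 0 < s) (l : ℕ) :
    0 < 1 + lam * ((d : ℝ) - 1) * (l : ℝ) / s := by
  have h1 : 0 ≤ lam * ((d : ℝ) - 1) * (l : ℝ) / s := by
    apply div_nonneg _ hs.le
    exact mul_nonneg (hA hlam0 hd).le (Nat.cast_nonneg l)
  linarith

lemma pden_pos (hlam0 : 0 < lam) (hd : 2 ≤ d) (hs : 0 < s) (x : ℕ) :
    0 < pden lam d s x :=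
  Finset.prod_pos fun l _ => factor_pos hlam0 hd hs l

lemma one_le_pden (hlam0 : 0 < lam) (hd : 2 ≤ d) (hs : 0 < s) (x : ℕ) :
    1 ≤ pden lam d s x := by
  rw [pden]
  have := Finset.prod_le_prod (s := Finset.Icc 1 x) (f := fun _ : ℕ => (1:ℝ))
    (g := fun l : ℕ => 1 + lam * ((d : ℝ) - 1) * (l : ℝ) / s)
    (fun i _ => zero_le_one)
    (fun l _ => by
      have h1 : 0 ≤ lam * ((d : ℝ) - 1) * (l : ℝ) / s :=
        div_nonneg (mul_nonneg (hA hlam0 hd).le (Nat.cast_nonneg l)) hs.le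
      linarith)
  simpa using this

lemma pden_succ (x : ℕ) :
    pden lam d s (x + 1) =
      pden lam d s x * (1 + lam * ((d : ℝ) - 1) * ((x : ℝ) + 1) / s) := by
  rw [pden, Finset.prod_Icc_succ_top (by omega : 1 ≤ x + 1)]
  push_cast
  rfl

lemma trm_zero : trm lam d s 0 = 1 := by simp [trm, pden]

lemma trm_pos (hlam0 : 0 < lam) (hd : 2 ≤ d) (hs : 0 < s) (x : ℕ) :
    0 < trm lam d s x :=
  div_pos (pow_pos (hD hlam0 hd) x) (pden_pos hlam0 hd hs x)

lemma trm_succ (hlam0 : 0 < lam) (hd : 2 ≤ d) (hs : 0 < s) (x : ℕ) :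
    trm lam d s (x + 1) * (1 + lam * ((d : ℝ) - 1) * ((x : ℝ) + 1) / s) =
      (d : ℝ) * lam * trm lam d s x := by
  have h2' : (1 + lam * ((d : ℝ) - 1) * ((x : ℝ) + 1) / s) ≠ 0 := by
    have := (factor_pos hlam0 hd hs (x + 1)).ne'
    push_cast at this; exact this
  rw [trm, trm, pden_succ, div_mul_eq_div_div, div_mul_cancel₀ _ h2', pow_succ]
  ring

lemma trm_succ_le (hlam0 : 0 < lam) (hd : 2 ≤ d) (hs : 0 < s) {x : ℕ} {c : ℝ}
    (hc : 0 < c) (hcle : c ≤ 1 + lam * ((d : ℝ) - 1) * ((x : ℝ) + 1) / s) :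
    trm lam d s (x + 1) ≤ (d : ℝ) * lam / c * trm lam d s x := by
  have hf := factor_pos hlam0 hd hs (x + 1)
  have hf' : 0 < 1 + lam * ((d : ℝ) - 1) * ((x : ℝ) + 1) / s := by
    push_cast at hf; exact hf
  have h := trm_succ hlam0 hd hs x
  have htx : 0 ≤ trm lam d s x := (trm_pos hlam0 hd hs x).le
  have hne : (1 + lam * ((d : ℝ) - 1) * ((x : ℝ) + 1) / s) ≠ 0 := hf'.ne'
  have : trm lam d s (x + 1) =
      (d : ℝ) * lam * trm lam d s x / (1 + lam * ((d : ℝ) - 1) * ((x : ℝ) + 1) / s) := by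
    rw [eq_div_iff hne]; exact h
  rw [this, div_mul_eq_mul_div]
  exact div_le_div_of_nonneg_left (by positivity) hc hcle

lemma summable_trm (hlam0 : 0 < lam) (hd : 2 ≤ d) (hs : 0 < s) :
    Summable (trm lam d s) := by
  apply summable_of_ratio_norm_eventually_le (r := 1/2) (by norm_num)
  have hA' := hA hlam0 hd
  have hD' := hD hlam0 hd
  rw [Filter.eventually_atTop]
  refine ⟨Nat.ceil (2 * ((d:ℝ)*lam) * s / (lam * ((d:ℝ)-1))), fun n hn => ?_⟩
  have hcle : 2 * ((d:ℝ)*lam) ≤ 1 + lam * ((d : ℝ) - 1) * ((n : ℝ) + 1) / s := by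
    have h1 : 2 * ((d:ℝ)*lam) * s / (lam * ((d:ℝ)-1)) ≤ (n : ℝ) + 1 := by
      calc 2 * ((d:ℝ)*lam) * s / (lam * ((d:ℝ)-1))
          ≤ (Nat.ceil (2 * ((d:ℝ)*lam) * s / (lam * ((d:ℝ)-1))) : ℝ) := Nat.le_ceil _
        _ ≤ (n : ℝ) := by exact_mod_cast hn
        _ ≤ (n : ℝ) + 1 := by linarith
    have h2 : 2 * ((d:ℝ)*lam) * s ≤ lam * ((d:ℝ)-1) * ((n : ℝ) + 1) := by
      rw [div_le_iff₀ hA'] at h1; linarith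
    have h3 : 2 * ((d:ℝ)*lam) ≤ lam * ((d:ℝ)-1) * ((n : ℝ) + 1) / s := by
      rw [le_div_iff₀ hs]; linarith
    linarith
  have hle := trm_succ_le hlam0 hd hs (c := 2 * ((d:ℝ)*lam)) (by positivity) hcle
  have hp1 := trm_pos hlam0 hd hs (n+1)
  have hp0 := trm_pos hlam0 hd hs n
  rw [Real.norm_of_nonneg hp1.le, Real.norm_of_nonneg hp0.le]
  calc trm lam d s (n+1) ≤ (d : ℝ) * lam / (2 * ((d:ℝ)*lam)) * trm lam d s n := hle
    _ = 1/2 * trm lam d s n := by rw [div_mul_eq_div_div_swap]; field_simp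

lemma summable_mul_trm (hlam0 : 0 < lam) (hd : 2 ≤ d) (hs : 0 < s) :
    Summable (fun x : ℕ => (x : ℝ) * trm lam d s x) := by
  apply summable_of_ratio_norm_eventually_le (r := 1/2) (by norm_num)
  have hA' := hA hlam0 hd
  have hD' := hD hlam0 hd
  rw [Filter.eventually_atTop]
  refine ⟨max 1 (Nat.ceil (4 * ((d:ℝ)*lam) * s / (lam * ((d:ℝ)-1)))), fun n hn => ?_⟩
  have hn1 : 1 ≤ n := le_trans (le_max_left _ _) hn
  have hge : (Nat.ceil (4 * ((d:ℝ)*lam) * s / (lam * ((d:ℝ)-1))) : ℕ) ≤ n :=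
    le_trans (le_max_right _ _) hn
  have hcle : 4 * ((d:ℝ)*lam) ≤ 1 + lam * ((d : ℝ) - 1) * ((n : ℝ) + 1) / s := by
    have h1 : 4 * ((d:ℝ)*lam) * s / (lam * ((d:ℝ)-1)) ≤ (n : ℝ) + 1 := by
      calc 4 * ((d:ℝ)*lam) * s / (lam * ((d:ℝ)-1))
          ≤ (Nat.ceil (4 * ((d:ℝ)*lam) * s / (lam * ((d:ℝ)-1))) : ℝ) := Nat.le_ceil _
        _ ≤ (n : ℝ) := by exact_mod_cast hge
        _ ≤ (n : ℝ) + 1 := by linarith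
    have h2 : 4 * ((d:ℝ)*lam) * s ≤ lam * ((d:ℝ)-1) * ((n : ℝ) + 1) := by
      rw [div_le_iff₀ hA'] at h1; linarith
    have h3 : 4 * ((d:ℝ)*lam) ≤ lam * ((d:ℝ)-1) * ((n : ℝ) + 1) / s := by
      rw [le_div_iff₀ hs]; linarith
    linarith
  have hle := trm_succ_le hlam0 hd hs (c := 4 * ((d:ℝ)*lam)) (by positivity) hcle
  have hp1 := trm_pos hlam0 hd hs (n+1)
  have hp0 := trm_pos hlam0 hd hs n
  have hn1' : (1:ℝ) ≤ (n:ℝ) := by exact_mod_cast hn1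
  rw [Real.norm_of_nonneg (by positivity), Real.norm_of_nonneg (by positivity)]
  push_cast
  calc ((n:ℝ) + 1) * trm lam d s (n+1)
      ≤ ((n:ℝ) + 1) * ((d : ℝ) * lam / (4 * ((d:ℝ)*lam)) * trm lam d s n) := by
        apply mul_le_mul_of_nonneg_left hle (by linarith)
    _ = ((n:ℝ) + 1) * (1/4 * trm lam d s n) := by
        rw [show (d : ℝ) * lam / (4 * ((d:ℝ)*lam)) = 1/4 by field_simp]
    _ ≤ (2 * (n:ℝ)) * (1/4 * trm lam d s n) := by
        apply mul_le_mul_of_nonneg_right (by linarith) (by positivity)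
    _ = 1/2 * ((n:ℝ) * trm lam d s n) := by ring

lemma pden_anti (hlam0 : 0 < lam) (hd : 2 ≤ d) (hs : 0 < s) (hss' : s ≤ s') (x : ℕ) :
    pden lam d s' x ≤ pden lam d s x := by
  have hs' : 0 < s' := lt_of_lt_of_le hs hss'
  rw [pden, pden]
  apply Finset.prod_le_prod
  · intro l _; exact (factor_pos hlam0 hd hs' l).le
  · intro l _
    have : lam * ((d : ℝ) - 1) * (l : ℝ) / s' ≤ lam * ((d : ℝ) - 1) * (l : ℝ) / s :=
      div_le_div_of_nonneg_left (mul_nonneg (hA hlam0 hd).le (Nat.cast_nonneg l)) hs hss'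
    linarith

lemma trm_mono (hlam0 : 0 < lam) (hd : 2 ≤ d) (hs : 0 < s) (hss' : s ≤ s') (x : ℕ) :
    trm lam d s x ≤ trm lam d s' x := by
  have hs' : 0 < s' := lt_of_lt_of_le hs hss'
  rw [trm, trm]
  exact div_le_div_of_nonneg_left (by positivity) (pden_pos hlam0 hd hs' x)
    (pden_anti hlam0 hd hs hss' x)

lemma trm_one_strict (hlam0 : 0 < lam) (hd : 2 ≤ d) (hs : 0 < s) (hss' : s < s') :
    trm lam d s 1 < trm lam d s' 1 := by
  have hs' : 0 < s' := lt_trans hs hss'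
  have hA' := hA hlam0 hd
  have hpden : pden lam d s' 1 < pden lam d s 1 := by
    rw [pden, pden]
    simp only [Finset.Icc_self, Finset.prod_singleton, Nat.cast_one, mul_one]
    have : lam * ((d : ℝ) - 1) / s' < lam * ((d : ℝ) - 1) / s :=
      div_lt_div_of_pos_left hA' hs hss'
    linarith
  rw [trm, trm]
  exact div_lt_div_of_pos_left (by positivity) (pden_pos hlam0 hd hs' 1) hpden

lemma Phi_strict (hlam0 : 0 < lam) (hd : 2 ≤ d) (hs : 0 < s) (hss' : s < s') :
    Phi lam d s < Phi lam d s' := by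
  have hs' : 0 < s' := lt_trans hs hss'
  apply Summable.tsum_lt_tsum_of_nonneg (i := 0)
  · exact fun b => (trm_pos hlam0 hd hs (b+1)).le
  · exact fun b => trm_mono hlam0 hd hs hss'.le (b+1)
  · exact trm_one_strict hlam0 hd hs hss'
  · exact (summable_nat_add_iff 1).2 (summable_trm hlam0 hd hs')

lemma Phi_inj (hlam0 : 0 < lam) (hd : 2 ≤ d) (hs : 0 < s) (hs' : 0 < s')
    (h : Phi lam d s = Phi lam d s') : s = s' := by
  rcases lt_trichotomy s s' with h1 | h1 | h1
  · exact absurd h (ne_of_lt (Phi_strict hlam0 hd hs h1))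
  · exact h1
  · exact absurd h.symm (ne_of_lt (Phi_strict hlam0 hd hs' h1))

lemma trm_le_geom (hlam0 : 0 < lam) (hd : 2 ≤ d) (hs : 0 < s) (x : ℕ) :
    trm lam d s (x + 1) ≤ ((d : ℝ) * lam * s / (lam * ((d : ℝ) - 1))) ^ (x + 1) := by
  have hA' := hA hlam0 hd
  have hDpos := hD hlam0 hd
  have hpb : (lam * ((d : ℝ) - 1) / s) ^ (x + 1) ≤ pden lam d s (x + 1) := by
    rw [pden]
    have hcard : (Finset.Icc 1 (x + 1)).card = x + 1 := by
      rw [Nat.card_Icc]; omega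
    calc (lam * ((d : ℝ) - 1) / s) ^ (x + 1)
        = ∏ _l ∈ Finset.Icc 1 (x + 1), (lam * ((d : ℝ) - 1) / s) := by
          rw [Finset.prod_const, hcard]
      _ ≤ _ := by
          apply Finset.prod_le_prod (fun l _ => by positivity)
          intro l hl
          have hl1 : 1 ≤ l := (Finset.mem_Icc.1 hl).1
          have hl1' : (1 : ℝ) ≤ (l : ℝ) := by exact_mod_cast hl1
          have h1 : lam * ((d : ℝ) - 1) / s ≤ lam * ((d : ℝ) - 1) * (l : ℝ) / s := by
            rw [div_le_div_iff_of_pos_right hs]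
            nlinarith
          linarith
  calc trm lam d s (x + 1) = ((d : ℝ) * lam) ^ (x + 1) / pden lam d s (x + 1) := rfl
    _ ≤ ((d : ℝ) * lam) ^ (x + 1) / (lam * ((d : ℝ) - 1) / s) ^ (x + 1) :=
        div_le_div_of_nonneg_left (by positivity) (by positivity) hpb
    _ = ((d : ℝ) * lam / (lam * ((d : ℝ) - 1) / s)) ^ (x + 1) := (div_pow _ _ _).symm
    _ = ((d : ℝ) * lam * s / (lam * ((d : ℝ) - 1))) ^ (x + 1) := by
        rw [div_div_eq_mul_div]

set_option maxHeartbeats 1000000 in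
lemma Phi_small' (hlam0 : 0 < lam) (hlam1 : lam < 1) (hd : 2 ≤ d) (hs : 0 < s)
    (hratio : (d : ℝ) * lam * s / (lam * ((d : ℝ) - 1)) ≤ lam / 2) :
    Phi lam d s < lam / (1 - lam) := by
  have hA' := hA hlam0 hd
  have hDpos := hD hlam0 hd
  have hgs : Summable (fun x : ℕ => (lam / 2) ^ (x + 1)) :=
    (summable_nat_add_iff 1).2 (summable_geometric_of_lt_one (by linarith) (by linarith))
  have h1 : Phi lam d s ≤ ∑' x : ℕ, (lam / 2) ^ (x + 1) := by
    rw [Phi]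
    refine Summable.tsum_le_tsum (f := fun x : ℕ => trm lam d s (x+1))
      (g := fun x : ℕ => (lam/2)^(x+1)) ?_
      ((summable_nat_add_iff 1).2 (summable_trm hlam0 hd hs)) hgs
    intro x
    calc trm lam d s (x + 1) ≤ ((d : ℝ) * lam * s / (lam * ((d : ℝ) - 1))) ^ (x + 1) :=
          trm_le_geom hlam0 hd hs x
      _ ≤ (lam / 2) ^ (x + 1) := by
          apply pow_le_pow_left₀ (by positivity) hratio
  have h2 : ∑' x : ℕ, (lam / 2) ^ (x + 1) = (lam / 2) * (1 - lam / 2)⁻¹ := by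
    have h : ∀ x : ℕ, (lam / 2) ^ (x + 1) = (lam / 2) * (lam / 2) ^ x := fun x => by
      rw [pow_succ]; ring
    rw [tsum_congr h, tsum_mul_left, tsum_geometric_of_lt_one (by linarith) (by linarith)]
  have h3 : (lam / 2) * (1 - lam / 2)⁻¹ < lam / (1 - lam) := by
    rw [← div_eq_mul_inv, div_lt_div_iff₀ (by linarith) (by linarith)]
    nlinarith
  rw [h2] at h1
  linarith

lemma Phi_small (hlam0 : 0 < lam) (hlam1 : lam < 1) (hd : 2 ≤ d) :
    ∃ s : ℝ, 0 < s ∧ Phi lam d s < lam / (1 - lam) := by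
  have hA' := hA hlam0 hd
  have hDpos := hD hlam0 hd
  refine ⟨lam * (lam * ((d : ℝ) - 1)) / (2 * ((d : ℝ) * lam)), by positivity, ?_⟩
  apply Phi_small' hlam0 hlam1 hd (by positivity)

  have hlne : lam ≠ 0 := hlam0.ne'
  have hdne : ((d:ℝ)) ≠ 0 := by positivity
  rw [div_le_iff₀ hA']
  have key : (d:ℝ) * lam * (lam * (lam * ((d:ℝ)-1)) / (2 * ((d:ℝ) * lam)))
      = lam / 2 * (lam * ((d:ℝ)-1)) := by
    field_simp
  rw [key]

lemma Phi_large (hlam0 : 0 < lam) (hlam1 : lam < 1) (hd : 2 ≤ d) :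
    ∃ s : ℝ, 0 < s ∧ lam / (1 - lam) < Phi lam d s := by
  have hA' := hA hlam0 hd
  have hDpos := hD hlam0 hd
  have h1lam : (0:ℝ) < 1 - lam := by linarith
  have hd2 : (2:ℝ) ≤ (d:ℝ) := by exact_mod_cast hd
  obtain ⟨N0, hN0⟩ := exists_pow_lt_of_lt_one h1lam hlam1
  set N := N0 + 1 with hNdef
  have hN : lam ^ N < 1 - lam :=
    lt_of_le_of_lt (pow_le_pow_of_le_one hlam0.le hlam1.le (by omega)) hN0
  have hsum_lam : ∑ x ∈ Finset.range N, lam ^ (x+1)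
      = lam * ((lam ^ N - 1) / (lam - 1)) := by
    have h : ∀ x ∈ Finset.range N, lam ^ (x+1) = lam * lam ^ x := fun x _ => by
      rw [pow_succ]; ring
    rw [Finset.sum_congr rfl h, ← Finset.mul_sum, geom_sum_eq hlam1.ne]
  have hsingle : lam ≤ ∑ x ∈ Finset.range N, ((2*lam) ^ (x+1) - lam ^ (x+1)) := by
    have h0 : (0:ℕ) ∈ Finset.range N := Finset.mem_range.2 (by omega)
    have h1 := Finset.single_le_sum (f := fun x : ℕ => (2*lam) ^ (x+1) - lam ^ (x+1))
      (fun x _ => sub_nonneg.2 (pow_le_pow_left₀ hlam0.le (by linarith) _)) h0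
    simp only [zero_add, pow_one] at h1
    linarith
  have hstep : lam / (1 - lam) < ∑ x ∈ Finset.range N, (2*lam) ^ (x+1) := by
    have hsub : ∑ x ∈ Finset.range N, ((2*lam) ^ (x+1) - lam ^ (x+1))
        = ∑ x ∈ Finset.range N, (2*lam) ^ (x+1) - ∑ x ∈ Finset.range N, lam ^ (x+1) :=
      Finset.sum_sub_distrib _ _
    have hS : (lam * ((lam ^ N - 1) / (lam - 1))) * (1 - lam) = lam - lam ^ (N+1) := by
      have hne : lam - 1 ≠ 0 := by intro h; apply hlam1.ne; linarith
      field_simp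
      ring
    rw [div_lt_iff₀ h1lam]
    have hhint : lam * lam ^ N < lam * (1 - lam) := mul_lt_mul_of_pos_left hN hlam0
    have hpows : lam ^ (N+1) = lam ^ N * lam := pow_succ lam N
    nlinarith [hS, hsub, hsingle, hsum_lam]
  have hT : ∑ x ∈ Finset.range N, (2*lam) ^ (x+1)
      ≤ ∑ x ∈ Finset.range N, ((d:ℝ)*lam) ^ (x+1) :=
    Finset.sum_le_sum fun x _ => pow_le_pow_left₀ (by positivity) (by nlinarith) _
  have hlt_final : lam / (1 - lam) < ∑ x ∈ Finset.range N, ((d:ℝ)*lam) ^ (x+1) :=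
    lt_of_lt_of_le hstep hT
  have htend : Filter.Tendsto (fun s : ℝ => ∑ x ∈ Finset.range N, trm lam d s (x+1)) atTop
      (𝓝 (∑ x ∈ Finset.range N, ((d:ℝ)*lam) ^ (x+1))) := by
    apply tendsto_finset_sum
    intro x _
    have hp : Filter.Tendsto (fun s : ℝ => pden lam d s (x+1)) atTop (𝓝 1) := by
      have h : Filter.Tendsto
          (fun s : ℝ => ∏ l ∈ Finset.Icc 1 (x+1), (1 + lam*((d:ℝ)-1)*(l:ℝ)/s)) atTop
          (𝓝 (∏ _l ∈ Finset.Icc 1 (x+1), (1:ℝ))) := by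
        apply tendsto_finset_prod
        intro l _
        have h0 : Filter.Tendsto (fun s : ℝ => lam*((d:ℝ)-1)*(l:ℝ)/s) atTop (𝓝 0) :=
          tendsto_const_nhds.div_atTop tendsto_id
        simpa using tendsto_const_nhds.add h0
      simpa [pden] using h
    have h2 := (tendsto_const_nhds (x := ((d:ℝ)*lam)^(x+1))
      (f := (atTop : Filter ℝ))).div hp one_ne_zero
    rw [div_one] at h2; exact h2
  have hev := htend.eventually (eventually_gt_nhds hlt_final)
  obtain ⟨s, hsgt, hs0⟩ := (hev.and (Filter.eventually_gt_atTop 0)).exists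
  refine ⟨s, hs0, lt_of_lt_of_le hsgt ?_⟩
  rw [Phi]
  exact Summable.sum_le_tsum (Finset.range N) (fun x _ => (trm_pos hlam0 hd hs0 (x+1)).le)
    ((summable_nat_add_iff 1).2 (summable_trm hlam0 hd hs0))

lemma exists_root (hlam0 : 0 < lam) (hlam1 : lam < 1) (hd : 2 ≤ d) :
    ∃ s : ℝ, 0 < s ∧ Phi lam d s = lam / (1 - lam) := by
  obtain ⟨s₀, hs₀, h₀⟩ := Phi_small hlam0 hlam1 hd
  obtain ⟨s₁, hs₁, h₁⟩ := Phi_large hlam0 hlam1 hd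
  have hlt : s₀ < s₁ := by
    by_contra hcon
    push_neg at hcon
    have hle : Phi lam d s₁ ≤ Phi lam d s₀ := by
      rcases eq_or_lt_of_le hcon with h | h
      · rw [h]
      · exact (Phi_strict hlam0 hd hs₁ h).le
    linarith
  have hcont : ContinuousOn (Phi lam d) (Set.Icc s₀ s₁) := by
    have hPhi : Phi lam d = fun s => ∑' x : ℕ, trm lam d s (x + 1) := rfl
    rw [hPhi]
    apply continuousOn_tsum (u := fun x : ℕ => trm lam d s₁ (x+1))
    · intro x
      apply ContinuousOn.div continuousOn_const
      · have hpden : ContinuousOn (fun s : ℝ =>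
            ∏ l ∈ Finset.Icc 1 (x+1), (1 + lam*((d:ℝ)-1)*(l:ℝ)/s)) (Set.Icc s₀ s₁) := by
          apply continuousOn_finset_prod
          intro l _
          exact continuousOn_const.add (continuousOn_const.div continuousOn_id
            (fun y hy => ne_of_gt (lt_of_lt_of_le hs₀ hy.1)))
        exact hpden
      · intro y hy
        exact (pden_pos hlam0 hd (lt_of_lt_of_le hs₀ hy.1) (x+1)).ne'
    · exact (summable_nat_add_iff 1).2 (summable_trm hlam0 hd hs₁)
    · intro n y hy
      rw [Real.norm_of_nonneg (trm_pos hlam0 hd (lt_of_lt_of_le hs₀ hy.1) (n+1)).le]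
      exact trm_mono hlam0 hd (lt_of_lt_of_le hs₀ hy.1) hy.2 (n+1)
  have hsub := intermediate_value_Icc hlt.le hcont
  have hmem : lam / (1-lam) ∈ Set.Icc (Phi lam d s₀) (Phi lam d s₁) := ⟨h₀.le, h₁.le⟩
  obtain ⟨s, hsIcc, hPs⟩ := hsub hmem
  exact ⟨s, lt_of_lt_of_le hs₀ hsIcc.1, hPs⟩

lemma construct (hlam0 : 0 < lam) (hlam1 : lam < 1) (hd : 2 ≤ d) (hs : 0 < s)
    (hroot : Phi lam d s = lam / (1 - lam)) :
    IsMFFixedPoint lam d (fun x => (1 - lam) * trm lam d s x) ∧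
      qbar (fun x => (1 - lam) * trm lam d s x) = s := by
  have hA' := hA hlam0 hd
  have hDpos := hD hlam0 hd
  have h1lam : (0:ℝ) < 1 - lam := by linarith
  set q : ℕ → ℝ := fun x => (1 - lam) * trm lam d s x with hqdef
  have hq0 : q 0 = 1 - lam := by simp [hqdef, trm_zero]
  have hqnn : ∀ x, 0 ≤ q x := fun x => mul_nonneg h1lam.le (trm_pos hlam0 hd hs x).le
  have hqsum : Summable q := (summable_trm hlam0 hd hs).mul_left _
  have htsum_trm : ∑' x : ℕ, trm lam d s x = 1 + lam / (1 - lam) := by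
    rw [Summable.tsum_eq_zero_add (summable_trm hlam0 hd hs), trm_zero,
      show (∑' b : ℕ, trm lam d s (b+1)) = Phi lam d s from rfl, hroot]
  have hqsum1 : ∑' x, q x = 1 := by
    rw [hqdef, tsum_mul_left, htsum_trm]
    field_simp
    ring
  have hxsum : Summable (fun x : ℕ => (x:ℝ) * q x) := by
    have h := (summable_mul_trm hlam0 hd hs).mul_left (1 - lam)
    exact h.congr (fun x => by rw [hqdef]; ring)
  have hrec : ∀ x : ℕ, q (x+1) * (1 + lam*((d:ℝ)-1)*((x:ℝ)+1)/s) = (d:ℝ)*lam * q x := by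
    intro x
    have h := trm_succ hlam0 hd hs x
    simp only [hqdef]
    linear_combination (1 - lam) * h
  have hshift_sum : ∑' x : ℕ, q (x+1) = lam := by
    have h := Summable.tsum_eq_zero_add hqsum
    rw [hqsum1, hq0] at h
    linarith
  have hs2 : Summable (fun x : ℕ => ((x:ℝ)+1) * q (x+1)) := by
    have h2 := (summable_nat_add_iff 1).2 hxsum
    exact h2.congr (fun x => by push_cast; ring)
  have hqbar_eq : qbar q = ∑' x : ℕ, ((x:ℝ)+1) * q (x+1) := by
    rw [show qbar q = ∑' x : ℕ, (x:ℝ) * q x from rfl, Summable.tsum_eq_zero_add hxsum]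
    have h2 : ∑' x : ℕ, ((x+1 : ℕ):ℝ) * q (x+1) = ∑' x : ℕ, ((x:ℝ)+1) * q (x+1) :=
      tsum_congr (fun x => by push_cast; ring)
    rw [h2]
    simp
  have key : ∀ x : ℕ, lam*((d:ℝ)-1)/s * (((x:ℝ)+1) * q (x+1))
      = (d:ℝ)*lam * q x - q (x+1) := by
    intro x
    linear_combination hrec x
  have hsum_key : (lam*((d:ℝ)-1)/s) * qbar q = lam*((d:ℝ)-1) := by
    have hca : (lam*((d:ℝ)-1)/s) * qbar q
        = ∑' x : ℕ, lam*((d:ℝ)-1)/s * (((x:ℝ)+1) * q (x+1)) := by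
      rw [hqbar_eq, tsum_mul_left]
    rw [hca, tsum_congr key,
      Summable.tsum_sub (hqsum.mul_left _) ((summable_nat_add_iff 1).2 hqsum),
      tsum_mul_left, hqsum1,
      show (∑' x : ℕ, q (x+1)) = lam from hshift_sum]
    ring
  have hqbar : qbar q = s := by
    have hAs : lam*((d:ℝ)-1)/s ≠ 0 := div_ne_zero hA'.ne' hs.ne'
    have h4 : qbar q = (lam*((d:ℝ)-1)) / (lam*((d:ℝ)-1)/s) := by
      rw [eq_div_iff hAs, mul_comm]
      exact hsum_key
    rw [h4, div_div_eq_mul_div, mul_comm, mul_div_assoc, div_self hA'.ne', mul_one]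
  refine ⟨⟨⟨hqnn, hqsum, hqsum1, hxsum, by rw [hqbar]; exact hs⟩, ?_⟩, hqbar⟩
  intro x hx
  obtain ⟨k, rfl⟩ : ∃ k, x = k + 1 := ⟨x - 1, by omega⟩
  have h1 := hrec k
  have h2 := hrec (k+1)
  simp only [drift, Nat.add_sub_cancel]
  rw [hq0, hqbar]
  push_cast at h1 h2 ⊢
  have hsne : s ≠ 0 := hs.ne'
  field_simp at h1 h2 ⊢
  linear_combination h2 - h1

lemma characterize (hlam0 : 0 < lam) (hlam1 : lam < 1) (hd : 2 ≤ d) (q : ℕ → ℝ)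
    (hq : IsMFFixedPoint lam d q) :
    q 0 = 1 - lam ∧ 0 < qbar q ∧ (∀ x, q x = (1 - lam) * trm lam d (qbar q) x) ∧
      Phi lam d (qbar q) = lam / (1 - lam) := by
  obtain ⟨⟨hnn, hsum, hsum1, hxsum, hqb⟩, hdrift⟩ := hq
  have hA' := hA hlam0 hd
  have hDpos := hD hlam0 hd
  have hd2 : (2:ℝ) ≤ (d:ℝ) := by exact_mod_cast hd
  have h1lam : (0:ℝ) < 1 - lam := by linarith
  set c : ℝ := (1 - q 0) * ((d:ℝ)-1) / qbar q with hcdef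
  set B : ℕ → ℝ := fun k => q (k+1) * (1 + c*((k:ℝ)+1)) - (d:ℝ)*lam * q k with hBdef
  have hstep : ∀ k : ℕ, B (k+1) - B k = drift lam d q (k+1) := by
    intro k
    simp only [hBdef, hcdef, drift, Nat.add_sub_cancel]
    push_cast
    ring
  have hBconst : ∀ k, B k = B 0 := by
    intro k
    induction k with
    | zero => rfl
    | succ n ih =>
      have h := hstep n
      rw [hdrift (n+1) (by omega)] at h
      linarith
  have hq1lim : Filter.Tendsto (fun k : ℕ => q (k+1)) atTop (𝓝 0) :=
    hsum.tendsto_atTop_zero.comp (tendsto_add_atTop_nat 1)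
  have hq0lim : Filter.Tendsto (fun k : ℕ => q k) atTop (𝓝 0) := hsum.tendsto_atTop_zero
  have hxlim : Filter.Tendsto (fun k : ℕ => ((k:ℝ)+1) * q (k+1)) atTop (𝓝 0) := by
    have h := hxsum.tendsto_atTop_zero.comp (tendsto_add_atTop_nat 1)
    apply Filter.Tendsto.congr _ h
    intro k
    show ((k+1 : ℕ):ℝ) * q (k+1) = _
    push_cast
    ring
  have hBlim : Filter.Tendsto B atTop (𝓝 0) := by
    have hlim := (hq1lim.add (hxlim.const_mul c)).sub (hq0lim.const_mul ((d:ℝ)*lam))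
    have hz : (0 + c*0 - (d:ℝ)*lam*0 : ℝ) = 0 := by ring
    rw [hz] at hlim
    apply Filter.Tendsto.congr _ hlim
    intro k
    simp only [hBdef]
    ring
  have hB0 : B 0 = 0 := by
    have h1 : Filter.Tendsto B atTop (𝓝 (B 0)) :=
      tendsto_const_nhds.congr fun k => (hBconst k).symm
    exact tendsto_nhds_unique h1 hBlim
  have hBzero : ∀ k, B k = 0 := fun k => (hBconst k).trans hB0
  have hs1 : Summable (fun k : ℕ => q (k+1)) := (summable_nat_add_iff 1).2 hsum
  have hs2 : Summable (fun k : ℕ => ((k:ℝ)+1) * q (k+1)) := by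
    have h := (summable_nat_add_iff 1).2 hxsum
    exact h.congr (fun k => by push_cast; ring)
  have hS1 : ∑' k : ℕ, q (k+1) = 1 - q 0 := by
    have h := Summable.tsum_eq_zero_add hsum
    rw [hsum1] at h
    linarith
  have hS2 : ∑' k : ℕ, ((k:ℝ)+1) * q (k+1) = qbar q := by
    have h := Summable.tsum_eq_zero_add hxsum
    rw [show (∑' x : ℕ, (x:ℝ) * q x) = qbar q from rfl] at h
    have h2 : ∑' k : ℕ, ((k:ℝ)+1) * q (k+1) = ∑' k : ℕ, ((k+1 : ℕ):ℝ) * q (k+1) :=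
      tsum_congr (fun k => by push_cast; ring)
    rw [h2, h]
    simp
  have hkey : (1 - q 0) + c * qbar q - (d:ℝ)*lam = 0 := by
    have h0 : ∑' k : ℕ, B k = 0 := by
      rw [tsum_congr hBzero]
      exact tsum_zero
    have hb : ∀ k : ℕ, B k = (q (k+1) + c * (((k:ℝ)+1) * q (k+1))) - (d:ℝ)*lam * q k :=
      fun k => by simp only [hBdef]; ring
    rw [tsum_congr hb, Summable.tsum_sub (hs1.add (hs2.mul_left c)) (hsum.mul_left _),
      Summable.tsum_add hs1 (hs2.mul_left c), tsum_mul_left, tsum_mul_left, hS1, hS2, hsum1] at h0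
    linarith
  have hcq : c * qbar q = (1 - q 0) * ((d:ℝ)-1) := by
    rw [hcdef]
    field_simp
  have hq0 : q 0 = 1 - lam := by
    have h3 : (1 - q 0) * (d:ℝ) = lam * (d:ℝ) := by nlinarith [hkey, hcq]
    have hdne : (d:ℝ) ≠ 0 := by positivity
    have h4 := mul_right_cancel₀ hdne h3
    linarith
  have hceq : c = lam * ((d:ℝ)-1) / qbar q := by rw [hcdef, hq0]; ring_nf
  have hform : ∀ x, q x = (1 - lam) * trm lam d (qbar q) x := by
    intro x
    induction x with
    | zero => rw [trm_zero, mul_one, hq0]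
    | succ n ih =>
      have hBe : q (n+1) * (1 + c*((n:ℝ)+1)) - (d:ℝ)*lam * q n = 0 := hBzero n
      rw [hceq] at hBe
      have htr := trm_succ (s := qbar q) hlam0 hd hqb n
      have hden : (1 + lam*((d:ℝ)-1)*((n:ℝ)+1)/qbar q) ≠ 0 := by
        have hf := factor_pos hlam0 hd hqb (n+1)
        push_cast at hf
        exact hf.ne'
      apply mul_right_cancel₀ hden
      have e1 : q (n+1) * (1 + lam*((d:ℝ)-1)*((n:ℝ)+1)/qbar q) = (d:ℝ)*lam * q n := by
        linear_combination hBe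
      rw [e1, ih]
      linear_combination (lam - 1) * htr
  have hPhi : Phi lam d (qbar q) = lam / (1 - lam) := by
    have h1 : ∑' k : ℕ, q (k+1) = lam := by rw [hS1, hq0]; ring
    have h2 : ∑' k : ℕ, q (k+1) = (1 - lam) * Phi lam d (qbar q) := by
      rw [tsum_congr (fun k => hform (k+1)), tsum_mul_left]
      rfl
    rw [h1] at h2
    rw [eq_div_iff h1lam.ne']
    linarith
  exact ⟨hq0, hqb, hform, hPhi⟩

end MFaux

theorem mean_field_fixed_point_unique_and_explicit
    (lam : ℝ) (hlam0 : 0 < lam) (hlam1 : lam < 1) (d : ℕ) (hd : 2 ≤ d) :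
    (∃! q : ℕ → ℝ, IsMFFixedPoint lam d q) ∧
    ∀ q : ℕ → ℝ, IsMFFixedPoint lam d q →
      q 0 = 1 - lam ∧
      (∀ x : ℕ, 1 ≤ x →
        q x = (1 - lam) * ((d : ℝ) * lam) ^ x /
          ∏ l ∈ Finset.Icc 1 x, (1 + lam * ((d : ℝ) - 1) * (l : ℝ) / qbar q)) ∧
      0 < qbar q ∧
      lam / (1 - lam) =
        (∑' x : ℕ, ((d : ℝ) * lam) ^ (x + 1) /
          ∏ l ∈ Finset.Icc 1 (x + 1), (1 + lam * ((d : ℝ) - 1) * (l : ℝ) / qbar q)) ∧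
      ∀ s : ℝ, 0 < s →
        lam / (1 - lam) =
          (∑' x : ℕ, ((d : ℝ) * lam) ^ (x + 1) /
            ∏ l ∈ Finset.Icc 1 (x + 1), (1 + lam * ((d : ℝ) - 1) * (l : ℝ) / s)) →
        s = qbar q := by
  obtain ⟨s, hs, hroot⟩ := MFaux.exists_root hlam0 hlam1 hd
  obtain ⟨hfix, hqbarS⟩ := MFaux.construct hlam0 hlam1 hd hs hroot
  have h1lam : (0:ℝ) < 1 - lam := by linarith
  constructor
  · refine ⟨(fun x => (1 - lam) * MFaux.trm lam d s x), hfix, ?_⟩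
    intro q hq
    obtain ⟨hq0, hqb, hform, hPhi⟩ := MFaux.characterize hlam0 hlam1 hd q hq
    have hsq : qbar q = s := MFaux.Phi_inj hlam0 hd hqb hs (hPhi.trans hroot.symm)
    funext x
    rw [hform x, hsq]
  · intro q hq
    obtain ⟨hq0, hqb, hform, hPhi⟩ := MFaux.characterize hlam0 hlam1 hd q hq
    refine ⟨hq0, ?_, hqb, ?_, ?_⟩
    · intro x _
      rw [hform x]
      simp only [MFaux.trm, MFaux.pden]
      ring
    · exact hPhi.symm
    · intro s' hs' hPs'
      have hA1 : MFaux.Phi lam d s' = lam / (1 - lam) := hPs'.symm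
      exact MFaux.Phi_inj hlam0 hd hs' hqb (hA1.trans hPhi.symm)
end

section
/- Let 0 < λ < 1 be real, d ≥ 2 an integer, and q admissible. Then for every z ≥ 1 the series ∑_{x≥z} D(x) converges absolutely and ∑_{x≥z} D(x) = dλ·q(z−1) − q(z) − ((1 − q(0))·(d−1)/q̄)·z·q(z). In particular, if q is a mean-field fixed point then q(z)·(1 + (1 − q(0))·(d−1)·z/q̄) = dλ·q(z−1) for every z ≥ 1. -/
open scoped BigOperators

private lemma tail_core (lam : ℝ) (d : ℕ) (q : ℕ → ℝ) (hq : Admissible q) (m : ℕ) :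
    Summable (fun n : ℕ => drift lam d q (m + 1 + n)) ∧
    (∑' n : ℕ, drift lam d q (m + 1 + n)) =
      (d : ℝ) * lam * q m - q (m+1) -
        (1 - q 0) * ((d : ℝ) - 1) / qbar q * ((m:ℝ)+1) * q (m+1) := by
  obtain ⟨hpos, hsum, hone, hmean, hqbar⟩ := hq
  set c : ℝ := (1 - q 0) * ((d : ℝ) - 1) / qbar q with hc
  set G : ℕ → ℝ := fun n => (d : ℝ) * lam * q (m + n) - q (m + 1 + n)
      - c * ((m : ℝ) + 1 + (n : ℝ)) * q (m + 1 + n) with hG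
  have h1 : Summable (fun n : ℕ => q (m + n)) := by
    have := (summable_nat_add_iff m).2 hsum
    simpa [Nat.add_comm] using this
  have h2 : Summable (fun n : ℕ => q (m + 1 + n)) := by
    have := (summable_nat_add_iff (m+1)).2 hsum
    simpa [Nat.add_comm] using this
  have h3 : Summable (fun n : ℕ => ((m : ℝ) + 1 + (n : ℝ)) * q (m + 1 + n)) := by
    have := (summable_nat_add_iff (m+1)).2 hmean
    have h : ∀ n : ℕ, (((n + (m+1) : ℕ)) : ℝ) * q (n + (m+1)) =
        ((m : ℝ) + 1 + (n : ℝ)) * q (m + 1 + n) := by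
      intro n; rw [Nat.add_comm n (m+1)]; push_cast; ring
    exact this.congr h
  have hGsum : Summable G := by
    apply Summable.sub (Summable.sub (h1.mul_left _) h2) (by
      simpa [mul_assoc] using h3.mul_left c)
  have hdG : ∀ n : ℕ, drift lam d q (m + 1 + n) = G n - G (n + 1) := by
    intro n
    have e1 : m + 1 + n - 1 = m + n := by omega
    have e2 : m + 1 + (n + 1) = m + 1 + n + 1 := by omega
    simp only [drift, hG, hc, e1, e2]
    push_cast
    ring
  have hGsum' : Summable (fun n => G (n + 1)) := (summable_nat_add_iff 1).2 hGsum
  have hsumD : Summable (fun n : ℕ => drift lam d q (m + 1 + n)) := by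
    simpa [hdG] using hGsum.sub hGsum'
  refine ⟨hsumD, ?_⟩
  have : (∑' n : ℕ, drift lam d q (m + 1 + n)) = ∑' n : ℕ, (G n - G (n + 1)) := by
    exact tsum_congr hdG
  rw [this, Summable.tsum_sub hGsum hGsum', Summable.tsum_eq_zero_add hGsum]
  simp [hG]

theorem tail_sum_of_drift
    (lam : ℝ) (hlam0 : 0 < lam) (hlam1 : lam < 1) (d : ℕ) (hd : 2 ≤ d)
    (q : ℕ → ℝ) (hq : Admissible q) :
    (∀ z : ℕ, 1 ≤ z →
      Summable (fun n : ℕ => |drift lam d q (z + n)|) ∧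
      (∑' n : ℕ, drift lam d q (z + n)) =
        (d : ℝ) * lam * q (z - 1) - q z -
          (1 - q 0) * ((d : ℝ) - 1) / qbar q * (z : ℝ) * q z) ∧
    (IsMFFixedPoint lam d q →
      ∀ z : ℕ, 1 ≤ z →
        q z * (1 + (1 - q 0) * ((d : ℝ) - 1) * (z : ℝ) / qbar q) =
          (d : ℝ) * lam * q (z - 1)) := by

  have key : ∀ z : ℕ, 1 ≤ z →
      Summable (fun n : ℕ => |drift lam d q (z + n)|) ∧
      (∑' n : ℕ, drift lam d q (z + n)) =
        (d : ℝ) * lam * q (z - 1) - q z -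
          (1 - q 0) * ((d : ℝ) - 1) / qbar q * (z : ℝ) * q z := by
    intro z hz
    obtain ⟨m, rfl⟩ : ∃ m, z = m + 1 := ⟨z - 1, by omega⟩
    obtain ⟨hS, hT⟩ := tail_core lam d q hq m
    refine ⟨summable_abs_iff.2 hS, ?_⟩
    rw [hT]
    simp only [Nat.add_sub_cancel]
    push_cast
    ring
  refine ⟨key, ?_⟩
  rintro ⟨_, hfix⟩ z hz
  obtain ⟨hS, hT⟩ := key z hz
  have hzero : (∑' n : ℕ, drift lam d q (z + n)) = 0 := by
    have h0 : ∀ n : ℕ, drift lam d q (z + n) = 0 := fun n => hfix (z + n) (by omega)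
    calc (∑' n : ℕ, drift lam d q (z + n)) = ∑' _ : ℕ, (0:ℝ) := tsum_congr h0
      _ = 0 := tsum_zero
  rw [hzero] at hT
  have hring : q z * (1 + (1 - q 0) * ((d : ℝ) - 1) * (z : ℝ) / qbar q) =
      q z + (1 - q 0) * ((d : ℝ) - 1) / qbar q * (z : ℝ) * q z := by ring
  rw [hring]
  linarith [hT]
end

section
/- Let 0 < λ < 1 be real and d ≥ 2 an integer. Every mean-field fixed point q satisfies q(0) = 1 − λ. -/
open scoped BigOperators

theorem fixed_point_q_zero
    (lam : ℝ) (hlam0 : 0 < lam) (hlam1 : lam < 1) (d : ℕ) (hd : 2 ≤ d)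
    (q : ℕ → ℝ) (hq : IsMFFixedPoint lam d q) :
    q 0 = 1 - lam := by
  obtain ⟨⟨hpos, hqsum, htsum, hxsum, hqbar⟩, hdrift⟩ := hq
  set c : ℝ := (1 - q 0) * ((d : ℝ) - 1) / qbar q with hc
  set g : ℕ → ℝ := fun x => (d : ℝ) * lam * q x - q (x + 1) - c * (((x : ℝ) + 1) * q (x + 1))
    with hg
  -- g is constant
  have hstep : ∀ x : ℕ, g x = g (x + 1) := by
    intro x
    have h := hdrift (x + 1) (Nat.le_add_left 1 x)
    simp only [drift, Nat.add_sub_cancel] at h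
    rw [← hc] at h
    simp only [hg]
    push_cast at h ⊢
    ring_nf at h ⊢
    linarith
  have hconst : ∀ x : ℕ, g x = g 0 := by
    intro x
    induction x with
    | zero => rfl
    | succ n ih => rw [← hstep n, ih]
  -- summability facts
  have hs1 : Summable (fun x : ℕ => q (x + 1)) := (summable_nat_add_iff 1).2 hqsum
  have hs2 : Summable (fun x : ℕ => ((x : ℝ) + 1) * q (x + 1)) := by
    have := (summable_nat_add_iff (f := fun x : ℕ => (x : ℝ) * q x) 1).2 hxsum
    refine this.congr fun x => ?_
    push_cast
    ring
  have hgsum : Summable g := ((hqsum.mul_left ((d : ℝ) * lam)).sub hs1).sub (hs2.mul_left c)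
  -- the constant must be 0
  have hg0 : g 0 = 0 := by
    have h1 : Filter.Tendsto g Filter.atTop (nhds 0) := hgsum.tendsto_atTop_zero
    have h2 : Filter.Tendsto g Filter.atTop (nhds (g 0)) := by
      have : g = fun _ => g 0 := funext hconst
      rw [this]; exact tendsto_const_nhds
    exact tendsto_nhds_unique h2 h1
  have hzero : ∀ x : ℕ, g x = 0 := fun x => (hconst x).trans hg0
  -- sum the identity
  have h1 : ∑' x : ℕ, q (x + 1) = 1 - q 0 := by
    have := Summable.tsum_eq_zero_add hqsum
    rw [htsum] at this
    linarith
  have h2 : ∑' x : ℕ, ((x : ℝ) + 1) * q (x + 1) = qbar q := by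
    have h := Summable.tsum_eq_zero_add hxsum
    have : (∑' x : ℕ, ((x : ℝ) + 1) * q (x + 1)) = ∑' x : ℕ, ((x + 1 : ℕ) : ℝ) * q (x + 1) := by
      refine tsum_congr fun x => ?_
      push_cast
      ring
    rw [this]
    simp only [Nat.cast_zero, zero_mul] at h
    rw [qbar, h]
    ring
  have htot : ∑' x, g x = 0 := by
    simp [funext hzero]
  have hsplit : ∑' x, g x = (d : ℝ) * lam * 1 - (1 - q 0) - c * qbar q := by
    simp only [hg]
    rw [Summable.tsum_sub ((hqsum.mul_left ((d : ℝ) * lam)).sub hs1) (hs2.mul_left c),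
      Summable.tsum_sub (hqsum.mul_left ((d : ℝ) * lam)) hs1, tsum_mul_left, tsum_mul_left,
      htsum, h1, h2]
  have hcq : c * qbar q = (1 - q 0) * ((d : ℝ) - 1) := by
    rw [hc, div_mul_cancel₀ _ (ne_of_gt hqbar)]
  rw [htot, hcq] at hsplit
  have hd' : (2 : ℝ) ≤ (d : ℝ) := by exact_mod_cast hd
  have : (d : ℝ) * lam = (d : ℝ) * (1 - q 0) := by nlinarith
  have hdne : (d : ℝ) ≠ 0 := by positivity
  have := mul_left_cancel₀ hdne this
  linarith
end

section
/- Let 0 < λ < 1 be real, d ≥ 2 an integer, and q admissible with finite second moment ∑_{x≥1} x²·q(x) < ∞. Then the series ∑_{x≥1} x·D(x) converges absolutely and ∑_{x≥1} x·D(x) = d·(λ − (1 − q(0))). Consequently, if q is a mean-field fixed point, then q(0) = 1 − λ. -/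
open scoped BigOperators

lemma hasSum_shift1 (f : ℕ → ℝ) (hf : Summable f) :
    HasSum (fun n => f (n + 1)) (∑' n, f n - f 0) := by
  rw [hasSum_nat_add_iff]
  simp only [Finset.range_one, Finset.sum_singleton]
  convert hf.hasSum using 1
  rfl
  ring

lemma hasSum_shift2 (f : ℕ → ℝ) (hf : Summable f) :
    HasSum (fun n => f (n + 2)) (∑' n, f n - f 0 - f 1) := by
  rw [hasSum_nat_add_iff]
  simp only [Finset.sum_range_succ, Finset.range_one, Finset.sum_singleton]
  convert hf.hasSum using 1
  rfl
  ring

theorem first_moment_of_drift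
    (lam : ℝ) (hlam0 : 0 < lam) (hlam1 : lam < 1) (d : ℕ) (hd : 2 ≤ d)
    (q : ℕ → ℝ) (hq : Admissible q)
    (hsecond : Summable (fun x : ℕ => (x : ℝ) ^ 2 * q x)) :
    Summable (fun x : ℕ => |((x : ℝ) + 1) * drift lam d q (x + 1)|) ∧
    (∑' x : ℕ, ((x : ℝ) + 1) * drift lam d q (x + 1)) =
      (d : ℝ) * (lam - (1 - q 0)) ∧
    (IsMFFixedPoint lam d q → q 0 = 1 - lam) := by
  obtain ⟨hpos, hsum, hone, hmean, hbar⟩ := hq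
  set M : ℝ := qbar q with hM
  set c : ℝ := (1 - q 0) * ((d : ℝ) - 1) / qbar q with hc
  set S2 : ℝ := ∑' x : ℕ, (x : ℝ) ^ 2 * q x with hS2
  have hMne : M ≠ 0 := ne_of_gt hbar
  -- HasSum facts for the basic sequences
  have H0 : HasSum q 1 := hone ▸ hsum.hasSum
  have H1 : HasSum (fun x : ℕ => (x : ℝ) * q x) M := hmean.hasSum
  have H2 : HasSum (fun x : ℕ => (x : ℝ) ^ 2 * q x) S2 := hsecond.hasSum
  -- shifted versions
  have H0a : HasSum (fun x : ℕ => q (x + 1)) (1 - q 0) := by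
    have := hasSum_shift1 q hsum
    rwa [hone] at this
  have H0b : HasSum (fun x : ℕ => q (x + 2)) (1 - q 0 - q 1) := by
    have := hasSum_shift2 q hsum
    rwa [hone] at this
  have H1a : HasSum (fun x : ℕ => ((x : ℝ) + 1) * q (x + 1)) M := by
    have h := hasSum_shift1 (fun x : ℕ => (x : ℝ) * q x) hmean
    simp only [Nat.cast_zero, zero_mul, sub_zero] at h
    convert h using 2 with x
    push_cast
    ring
    exact hM
  have H1b : HasSum (fun x : ℕ => ((x : ℝ) + 2) * q (x + 2)) (M - q 1) := by
    have h := hasSum_shift2 (fun x : ℕ => (x : ℝ) * q x) hmean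
    simp only [Nat.cast_zero, zero_mul, sub_zero, Nat.cast_one, one_mul] at h
    convert h using 2 with x
    push_cast
    ring
    exact hM
  have H2a : HasSum (fun x : ℕ => ((x : ℝ) + 1) ^ 2 * q (x + 1)) S2 := by
    have h := hasSum_shift1 (fun x : ℕ => (x : ℝ) ^ 2 * q x) hsecond
    simp only [Nat.cast_zero] at h
    have h' : (0:ℝ) ^ 2 * q 0 = 0 := by ring
    rw [h'] at h
    simp only [sub_zero] at h
    convert h using 2 with x
    push_cast
    ring
  have H2b : HasSum (fun x : ℕ => ((x : ℝ) + 2) ^ 2 * q (x + 2)) (S2 - q 1) := by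
    have h := hasSum_shift2 (fun x : ℕ => (x : ℝ) ^ 2 * q x) hsecond
    simp only [Nat.cast_zero, Nat.cast_one, one_pow, one_mul] at h
    have h' : (0:ℝ) ^ 2 * q 0 = 0 := by ring
    rw [h'] at h
    simp only [sub_zero] at h
    convert h using 2 with x
    push_cast
    ring
  -- the key pointwise identity
  have hf : (fun x : ℕ => ((x : ℝ) + 1) * drift lam d q (x + 1)) =
      fun x : ℕ =>
        (d : ℝ) * lam * ((x : ℝ) * q x) + (d : ℝ) * lam * q x
          - (d : ℝ) * lam * (((x : ℝ) + 1) * q (x + 1))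
          + (((x : ℝ) + 2) * q (x + 2)) - q (x + 2)
          - (((x : ℝ) + 1) * q (x + 1))
          + c * (((x : ℝ) + 2) ^ 2 * q (x + 2))
          - c * (((x : ℝ) + 2) * q (x + 2))
          - c * (((x : ℝ) + 1) ^ 2 * q (x + 1)) := by
    funext x
    simp only [drift, Nat.add_sub_cancel, hc]
    push_cast
    ring
  -- HasSum for the full expression
  have HF : HasSum (fun x : ℕ => ((x : ℝ) + 1) * drift lam d q (x + 1))
      ((d : ℝ) * lam * M + (d : ℝ) * lam * 1 - (d : ℝ) * lam * M
        + (M - q 1) - (1 - q 0 - q 1) - M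
        + c * (S2 - q 1) - c * (M - q 1) - c * S2) := by
    rw [hf]
    exact ((((((((H1.mul_left _).add (H0.mul_left _)).sub (H1a.mul_left _)).add
      H1b).sub H0b).sub H1a).add (H2b.mul_left _)).sub (H1b.mul_left _)).sub
      (H2a.mul_left _)
  have hval : (d : ℝ) * lam * M + (d : ℝ) * lam * 1 - (d : ℝ) * lam * M
        + (M - q 1) - (1 - q 0 - q 1) - M
        + c * (S2 - q 1) - c * (M - q 1) - c * S2
      = (d : ℝ) * (lam - (1 - q 0)) := by
    rw [hc, ← hM]
    field_simp
    ring
  rw [hval] at HF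
  have hts := HF.tsum_eq
  refine ⟨summable_abs_iff.mpr HF.summable, hts, ?_⟩
  rintro ⟨-, hfix⟩
  have hz : (fun x : ℕ => ((x : ℝ) + 1) * drift lam d q (x + 1)) = fun _ => (0:ℝ) := by
    funext x
    rw [hfix (x + 1) (Nat.le_add_left 1 x), mul_zero]
  rw [hz, tsum_zero] at hts
  have hdne : (d : ℝ) ≠ 0 := by
    have : (0:ℕ) < d := lt_of_lt_of_le (by norm_num) hd
    exact_mod_cast this.ne'
  have : lam - (1 - q 0) = 0 := by
    rcases mul_eq_zero.mp hts.symm with h | h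
    · exact absurd h hdne
    · exact h
  linarith
end

section
/- Let 0 < λ < 1 be real and d ≥ 2 an integer. For s > 0 the series F(s) := ∑_{x≥1} (dλ)^x / ∏_{ℓ=1}^{x} (1 + λ(d−1)ℓ/s) converges; the function F is strictly monotone increasing on (0,∞); and F(s) tends to 0 as s tends to 0 from the right. -/
open scoped BigOperators

/-- `F(s) = ∑_{x≥1} (dλ)^x / ∏_{ℓ=1}^x (1 + λ(d−1)ℓ/s)`. -/
noncomputable def F (lam : ℝ) (d : ℕ) (s : ℝ) : ℝ :=
  ∑' x : ℕ, ((d : ℝ) * lam) ^ (x + 1) /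
    ∏ l ∈ Finset.Icc 1 (x + 1), (1 + lam * ((d : ℝ) - 1) * (l : ℝ) / s)

set_option maxHeartbeats 1000000 in
theorem F_summable_strictMono_tendsto_zero
    (lam : ℝ) (hlam0 : 0 < lam) (hlam1 : lam < 1) (d : ℕ) (hd : 2 ≤ d) :
    (∀ s : ℝ, 0 < s →
      Summable (fun x : ℕ => ((d : ℝ) * lam) ^ (x + 1) /
        ∏ l ∈ Finset.Icc 1 (x + 1), (1 + lam * ((d : ℝ) - 1) * (l : ℝ) / s))) ∧
    StrictMonoOn (F lam d) (Set.Ioi 0) ∧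
    Filter.Tendsto (F lam d) (nhdsWithin 0 (Set.Ioi 0)) (nhds 0) := by
  have hd2 : (2:ℝ) ≤ (d:ℝ) := by exact_mod_cast hd
  have hd1 : (0:ℝ) < (d:ℝ) - 1 := by linarith
  have hdpos : (0:ℝ) < (d:ℝ) := by linarith
  have hdl : (0:ℝ) < (d:ℝ) * lam := mul_pos hdpos hlam0
  set a : ℝ → ℕ → ℝ := fun s x => ((d : ℝ) * lam) ^ (x + 1) /
    ∏ l ∈ Finset.Icc 1 (x + 1), (1 + lam * ((d : ℝ) - 1) * (l : ℝ) / s) with ha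
  -- positivity of factors and products
  have hfac : ∀ {s : ℝ}, 0 < s → ∀ l : ℕ, 0 < 1 + lam * ((d:ℝ)-1) * (l:ℝ) / s := by
    intro s hs l
    have h0 : (0:ℝ) ≤ lam * ((d:ℝ)-1) * (l:ℝ) / s :=
      div_nonneg (mul_nonneg (mul_nonneg hlam0.le hd1.le) (Nat.cast_nonneg l)) hs.le
    linarith
  have hprodpos : ∀ {s : ℝ}, 0 < s → ∀ x : ℕ,
      0 < ∏ l ∈ Finset.Icc 1 (x+1), (1 + lam * ((d:ℝ)-1) * (l:ℝ) / s) :=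
    fun {s} hs x => Finset.prod_pos fun l _ => hfac hs l
  have hapos : ∀ {s : ℝ}, 0 < s → ∀ x : ℕ, 0 < a s x :=
    fun {s} hs x => div_pos (pow_pos hdl _) (hprodpos hs x)
  -- factorial cast of product over Icc
  have hIcc : ∀ x : ℕ, (∏ l ∈ Finset.Icc 1 (x+1), (l:ℝ)) = (Nat.factorial (x+1) : ℝ) := by
    intro x
    rw [← Nat.cast_prod]
    norm_cast
    rw [← Finset.prod_Ico_id_eq_factorial (x+1), ← Finset.Ico_add_one_right_eq_Icc]
  -- key upper bound on terms
  have hbound : ∀ {s : ℝ}, 0 < s → ∀ x : ℕ,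
      a s x ≤ ((d:ℝ)*s/((d:ℝ)-1))^(x+1) / (Nat.factorial (x+1) : ℝ) := by
    intro s hs x
    have hX : (0:ℝ) < lam * ((d:ℝ)-1) / s := div_pos (mul_pos hlam0 hd1) hs
    have hprodlb : (lam*((d:ℝ)-1)/s)^(x+1) * (Nat.factorial (x+1) : ℝ)
        ≤ ∏ l ∈ Finset.Icc 1 (x+1), (1 + lam * ((d:ℝ)-1) * (l:ℝ) / s) := by
      have h1 : ∏ l ∈ Finset.Icc 1 (x+1), (lam*((d:ℝ)-1)/s * (l:ℝ))
          ≤ ∏ l ∈ Finset.Icc 1 (x+1), (1 + lam * ((d:ℝ)-1) * (l:ℝ) / s) := by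
        apply Finset.prod_le_prod
        · intro l _; exact mul_nonneg hX.le (Nat.cast_nonneg l)
        · intro l _
          have he : lam*((d:ℝ)-1)/s * (l:ℝ) = lam * ((d:ℝ)-1) * (l:ℝ) / s := by ring
          rw [he]
          have := hfac hs l
          linarith [div_nonneg (mul_nonneg (mul_nonneg hlam0.le hd1.le) (Nat.cast_nonneg l)) hs.le]
      calc (lam*((d:ℝ)-1)/s)^(x+1) * (Nat.factorial (x+1) : ℝ)
          = ∏ l ∈ Finset.Icc 1 (x+1), (lam*((d:ℝ)-1)/s * (l:ℝ)) := by
            rw [Finset.prod_mul_distrib, Finset.prod_const, hIcc, Nat.card_Icc]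
            norm_num
        _ ≤ _ := h1
    have hB : (0:ℝ) < (lam*((d:ℝ)-1)/s)^(x+1) * (Nat.factorial (x+1) : ℝ) := by
      have : (0:ℝ) < (Nat.factorial (x+1) : ℝ) := by exact_mod_cast Nat.factorial_pos (x+1)
      exact mul_pos (pow_pos hX _) this
    have step1 : a s x ≤ ((d:ℝ)*lam)^(x+1) /
        ((lam*((d:ℝ)-1)/s)^(x+1) * (Nat.factorial (x+1) : ℝ)) := by
      apply div_le_div_of_nonneg_left (pow_pos hdl _).le (hB) hprodlb
    refine step1.trans_eq ?_
    have hfpos : (0:ℝ) < (Nat.factorial (x+1) : ℝ) := by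
      exact_mod_cast Nat.factorial_pos (x+1)
    rw [div_eq_div_iff hB.ne' hfpos.ne']
    have hkey : (d:ℝ)*lam = ((d:ℝ)*s/((d:ℝ)-1)) * (lam*((d:ℝ)-1)/s) := by
      field_simp
    rw [hkey, mul_pow, mul_assoc]
  -- summability
  have hsum : ∀ s : ℝ, 0 < s → Summable (a s) := by
    intro s hs
    have hg : Summable (fun x : ℕ => ((d:ℝ)*s/((d:ℝ)-1))^(x+1) / (Nat.factorial (x+1) : ℝ)) :=
      (summable_nat_add_iff 1).mpr (Real.summable_pow_div_factorial ((d:ℝ)*s/((d:ℝ)-1)))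
    exact Summable.of_nonneg_of_le (fun x => (hapos hs x).le) (hbound hs) hg
  refine ⟨hsum, ?_, ?_⟩
  · -- strict monotonicity
    intro s hs t ht hst
    simp only [Set.mem_Ioi] at hs ht
    have hle : ∀ x : ℕ, a s x ≤ a t x := by
      intro x
      simp only [ha]
      apply div_le_div_of_nonneg_left (pow_pos hdl _).le (hprodpos ht x)
      apply Finset.prod_le_prod
      · intro l _; exact (hfac ht l).le
      · intro l _
        have hc : (0:ℝ) ≤ lam * ((d:ℝ)-1) * (l:ℝ) :=
          mul_nonneg (mul_nonneg hlam0.le hd1.le) (Nat.cast_nonneg l)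
        gcongr
    have hlt : a s 0 < a t 0 := by
      show ((d:ℝ)*lam)^(0+1) / _ < ((d:ℝ)*lam)^(0+1) / _
      apply div_lt_div_of_pos_left (pow_pos hdl _) (hprodpos ht 0)
      simp only [Finset.Icc_self, Finset.prod_singleton]
      have hc : (0:ℝ) < lam * ((d:ℝ)-1) * ((1:ℕ):ℝ) := by
        simp; positivity
      have := div_lt_div_of_pos_left hc hs hst
      linarith
    exact Summable.tsum_lt_tsum hle hlt (hsum s hs) (hsum t ht)
  · -- tendsto 0
    have hδ : (0:ℝ) < ((d:ℝ)-1)/(2*(d:ℝ)) := by positivity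
    apply squeeze_zero' (g := fun s : ℝ => 2 * ((d:ℝ)/((d:ℝ)-1)) * s)
    · filter_upwards [self_mem_nhdsWithin] with s hs
      exact tsum_nonneg fun x => (hapos hs x).le
    · filter_upwards [Ioo_mem_nhdsGT hδ, self_mem_nhdsWithin] with s hsδ hs
      simp only [Set.mem_Ioi] at hs
      set c : ℝ := (d:ℝ)*s/((d:ℝ)-1) with hc
      have hc0 : 0 ≤ c := by positivity
      have hc2 : c ≤ 1/2 := by
        rw [hc, div_le_div_iff₀ hd1 (by norm_num)]
        have := hsδ.2
        rw [lt_div_iff₀ (by positivity)] at this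
        nlinarith
      have hgsum : Summable (fun x : ℕ => c * (1/2:ℝ)^x) :=
        (summable_geometric_of_lt_one (by norm_num) (by norm_num)).mul_left c
      have hFle : F lam d s ≤ ∑' x : ℕ, c * (1/2:ℝ)^x := by
        apply Summable.tsum_le_tsum _ (hsum s hs) hgsum
        intro x
        refine (hbound hs x).trans ?_
        have h1 : c^(x+1) / (Nat.factorial (x+1) : ℝ) ≤ c^(x+1) := by
          apply div_le_self (by positivity)
          exact_mod_cast Nat.one_le_iff_ne_zero.mpr (Nat.factorial_ne_zero (x+1))
        refine h1.trans ?_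
        rw [pow_succ, mul_comm]
        exact mul_le_mul_of_nonneg_left (pow_le_pow_left₀ hc0 hc2 x) hc0
      have hgeom : ∑' x : ℕ, c * (1/2:ℝ)^x = 2 * ((d:ℝ)/((d:ℝ)-1)) * s := by
        rw [tsum_mul_left, tsum_geometric_of_lt_one (by norm_num) (by norm_num), hc]
        field_simp
        ring
      rw [hgeom] at hFle
      exact hFle
    · have hcont : Continuous (fun s : ℝ => 2 * ((d:ℝ)/((d:ℝ)-1)) * s) := (continuous_const.mul continuous_id)
      have h0 : Filter.Tendsto (fun s : ℝ => 2 * ((d:ℝ)/((d:ℝ)-1)) * s) (nhds 0) (nhds 0) := by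
        simpa using hcont.tendsto 0
      exact h0.mono_left nhdsWithin_le_nhds
end

section
/- Let 0 < λ < 1 be real and d ≥ 2 an integer. There exists a unique s ∈ (0,∞) such that F(s) = λ/(1−λ). -/
open scoped BigOperators

open Filter

namespace FAux

/-- The `x`-th term of the series defining `F`. -/
noncomputable def term (lam : ℝ) (d : ℕ) (s : ℝ) (x : ℕ) : ℝ :=
  ((d : ℝ) * lam) ^ (x + 1) /
    ∏ l ∈ Finset.Icc 1 (x + 1), (1 + lam * ((d : ℝ) - 1) * (l : ℝ) / s)

lemma F_eq (lam : ℝ) (d : ℕ) (s : ℝ) : F lam d s = ∑' x : ℕ, term lam d s x := rfl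

section basic

variable {lam : ℝ} {d : ℕ} (hlam0 : 0 < lam) (hlam1 : lam < 1) (hd : 2 ≤ d)

include hlam0 hlam1 hd

lemma hc : 0 < lam * ((d : ℝ) - 1) := by
  have : (2 : ℝ) ≤ (d : ℝ) := by exact_mod_cast hd
  nlinarith

lemma hr : 0 < (d : ℝ) * lam := by
  have : (2 : ℝ) ≤ (d : ℝ) := by exact_mod_cast hd
  nlinarith

lemma one_le_factor {s : ℝ} (hs : 0 < s) (l : ℕ) :
    1 ≤ 1 + lam * ((d : ℝ) - 1) * (l : ℝ) / s := by
  have h1 : 0 ≤ lam * ((d : ℝ) - 1) * (l : ℝ) / s := by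
    have := hc hlam0 hlam1 hd
    positivity
  linarith

lemma prod_ge_one {s : ℝ} (hs : 0 < s) (x : ℕ) :
    1 ≤ ∏ l ∈ Finset.Icc 1 (x + 1), (1 + lam * ((d : ℝ) - 1) * (l : ℝ) / s) := by
  have := Finset.prod_le_prod (s := Finset.Icc 1 (x + 1)) (f := fun _ : ℕ => (1 : ℝ))
    (g := fun l : ℕ => 1 + lam * ((d : ℝ) - 1) * (l : ℝ) / s)
    (fun l _ => zero_le_one) (fun l _ => one_le_factor hlam0 hlam1 hd hs l)
  simpa using this

lemma prod_pos {s : ℝ} (hs : 0 < s) (x : ℕ) :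
    0 < ∏ l ∈ Finset.Icc 1 (x + 1), (1 + lam * ((d : ℝ) - 1) * (l : ℝ) / s) :=
  lt_of_lt_of_le one_pos (prod_ge_one hlam0 hlam1 hd hs x)

lemma term_pos {s : ℝ} (hs : 0 < s) (x : ℕ) : 0 < term lam d s x :=
  div_pos (pow_pos (hr hlam0 hlam1 hd) _) (prod_pos hlam0 hlam1 hd hs x)

lemma term_succ {s : ℝ} (hs : 0 < s) (x : ℕ) :
    term lam d s (x + 1) =
      term lam d s x *
        ((d : ℝ) * lam / (1 + lam * ((d : ℝ) - 1) * ((x : ℝ) + 2) / s)) := by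
  have hP := prod_pos hlam0 hlam1 hd hs x
  have hf : (0 : ℝ) < 1 + lam * ((d : ℝ) - 1) * ((x + 2 : ℕ) : ℝ) / s :=
    lt_of_lt_of_le one_pos (one_le_factor hlam0 hlam1 hd hs (x + 2))
  have hprod :
      ∏ l ∈ Finset.Icc 1 (x + 1 + 1), (1 + lam * ((d : ℝ) - 1) * (l : ℝ) / s) =
        (∏ l ∈ Finset.Icc 1 (x + 1), (1 + lam * ((d : ℝ) - 1) * (l : ℝ) / s)) *
          (1 + lam * ((d : ℝ) - 1) * ((x + 2 : ℕ) : ℝ) / s) := by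
    rw [Finset.prod_Icc_succ_top (by omega : 1 ≤ x + 1 + 1)]
  have hcast : ((x + 2 : ℕ) : ℝ) = (x : ℝ) + 2 := by push_cast; ring
  unfold term
  rw [hprod, hcast] at *
  field_simp
  ring

lemma term_summable {s : ℝ} (hs : 0 < s) : Summable (term lam d s) := by
  have hrpos := hr hlam0 hlam1 hd
  apply summable_of_ratio_norm_eventually_le (r := 1 / 2) (by norm_num)
  have hcpos := hc (d := d) hlam0 hlam1 hd
  filter_upwards [eventually_ge_atTop ⌈2 * ((d : ℝ) * lam) * s / (lam * ((d : ℝ) - 1))⌉₊]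
    with n hn
  have hpos := term_pos hlam0 hlam1 hd hs n
  have hpos' := term_pos hlam0 hlam1 hd hs (n + 1)
  rw [Real.norm_of_nonneg hpos'.le, Real.norm_of_nonneg hpos.le,
    term_succ hlam0 hlam1 hd hs n]
  have hfpos : (0 : ℝ) < 1 + lam * ((d : ℝ) - 1) * ((n : ℝ) + 2) / s := by positivity
  have hge : 2 * ((d : ℝ) * lam) ≤ 1 + lam * ((d : ℝ) - 1) * ((n : ℝ) + 2) / s := by
    have h1 : 2 * ((d : ℝ) * lam) * s / (lam * ((d : ℝ) - 1)) ≤ (n : ℝ) := by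
      calc 2 * ((d : ℝ) * lam) * s / (lam * ((d : ℝ) - 1)) ≤
          (⌈2 * ((d : ℝ) * lam) * s / (lam * ((d : ℝ) - 1))⌉₊ : ℝ) := Nat.le_ceil _
        _ ≤ (n : ℝ) := by exact_mod_cast hn
    have h2 : 2 * ((d : ℝ) * lam) * s ≤ lam * ((d : ℝ) - 1) * (n : ℝ) := by
      rw [div_le_iff₀ hcpos] at h1; linarith [h1]
    have h3 : lam * ((d : ℝ) - 1) * (n : ℝ) ≤ lam * ((d : ℝ) - 1) * ((n : ℝ) + 2) := by
      nlinarith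
    have h4 : 2 * ((d : ℝ) * lam) ≤ lam * ((d : ℝ) - 1) * ((n : ℝ) + 2) / s := by
      rw [le_div_iff₀ hs]; linarith
    linarith
  have hq : (d : ℝ) * lam / (1 + lam * ((d : ℝ) - 1) * ((n : ℝ) + 2) / s) ≤ 1 / 2 := by
    rw [div_le_div_iff₀ hfpos (by norm_num)]
    linarith
  calc term lam d s n * ((d : ℝ) * lam / (1 + lam * ((d : ℝ) - 1) * ((n : ℝ) + 2) / s))
      ≤ term lam d s n * (1 / 2) := by
        exact mul_le_mul_of_nonneg_left hq hpos.le
    _ = 1 / 2 * term lam d s n := by ring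

lemma prod_anti {s₁ s₂ : ℝ} (hs₁ : 0 < s₁) (hle : s₁ ≤ s₂) (x : ℕ) :
    ∏ l ∈ Finset.Icc 1 (x + 1), (1 + lam * ((d : ℝ) - 1) * (l : ℝ) / s₂) ≤
      ∏ l ∈ Finset.Icc 1 (x + 1), (1 + lam * ((d : ℝ) - 1) * (l : ℝ) / s₁) := by
  have hs₂ : 0 < s₂ := lt_of_lt_of_le hs₁ hle
  apply Finset.prod_le_prod
  · intro l _
    exact le_trans zero_le_one (one_le_factor hlam0 hlam1 hd hs₂ l)
  · intro l _
    have hcl : 0 ≤ lam * ((d : ℝ) - 1) * (l : ℝ) := by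
      have := hc (d := d) hlam0 hlam1 hd; positivity
    have := div_le_div_of_nonneg_left hcl hs₁ hle
    linarith [div_le_div_of_nonneg_left hcl hs₁ hle]

lemma term_mono {s₁ s₂ : ℝ} (hs₁ : 0 < s₁) (hle : s₁ ≤ s₂) (x : ℕ) :
    term lam d s₁ x ≤ term lam d s₂ x := by
  have hs₂ : 0 < s₂ := lt_of_lt_of_le hs₁ hle
  unfold term
  apply div_le_div_of_nonneg_left (pow_pos (hr hlam0 hlam1 hd) _).le
    (prod_pos hlam0 hlam1 hd hs₂ x) (prod_anti hlam0 hlam1 hd hs₁ hle x)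

lemma term_strict_mono {s₁ s₂ : ℝ} (hs₁ : 0 < s₁) (hlt : s₁ < s₂) (x : ℕ) :
    term lam d s₁ x < term lam d s₂ x := by
  have hs₂ : 0 < s₂ := lt_trans hs₁ hlt
  have hcpos := hc (d := d) hlam0 hlam1 hd
  have hPlt :
      ∏ l ∈ Finset.Icc 1 (x + 1), (1 + lam * ((d : ℝ) - 1) * (l : ℝ) / s₂) <
        ∏ l ∈ Finset.Icc 1 (x + 1), (1 + lam * ((d : ℝ) - 1) * (l : ℝ) / s₁) := by
    apply Finset.prod_lt_prod
    · intro l _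
      exact lt_of_lt_of_le one_pos (one_le_factor hlam0 hlam1 hd hs₂ l)
    · intro l _
      have hcl : 0 ≤ lam * ((d : ℝ) - 1) * (l : ℝ) := by positivity
      linarith [div_le_div_of_nonneg_left hcl hs₁ hlt.le]
    · refine ⟨1, by simp, ?_⟩
      have hcl : 0 < lam * ((d : ℝ) - 1) * ((1 : ℕ) : ℝ) := by norm_num; exact hcpos
      have := div_lt_div_of_pos_left hcl hs₁ hlt
      linarith
  unfold term
  exact div_lt_div_of_pos_left (pow_pos (hr hlam0 hlam1 hd) _)
    (prod_pos hlam0 hlam1 hd hs₂ x) hPlt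

lemma F_strictMonoOn : StrictMonoOn (F lam d) (Set.Ioi 0) := by
  intro s₁ hs₁ s₂ hs₂ hlt
  rw [F_eq, F_eq]
  exact Summable.tsum_lt_tsum_of_nonneg (i := 0)
    (fun x => (term_pos hlam0 hlam1 hd hs₁ x).le)
    (fun x => term_mono hlam0 hlam1 hd hs₁ hlt.le x)
    (term_strict_mono hlam0 hlam1 hd hs₁ hlt 0)
    (term_summable hlam0 hlam1 hd hs₂)

lemma F_continuousOn {a b : ℝ} (ha : 0 < a) :
    ContinuousOn (F lam d) (Set.Icc a b) := by
  rcases le_or_gt a b with hab | hab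
  · have hb : 0 < b := lt_of_lt_of_le ha hab
    have : ContinuousOn (fun s => ∑' x : ℕ, term lam d s x) (Set.Icc a b) := by
      apply continuousOn_tsum (u := term lam d b)
      · intro x
        apply ContinuousOn.div continuousOn_const
        · apply continuousOn_finset_prod
          intro l _
          exact continuousOn_const.add (continuousOn_const.div continuousOn_id
            (fun s hs => ne_of_gt (lt_of_lt_of_le ha hs.1)))
        · intro s hs
          exact ne_of_gt (prod_pos hlam0 hlam1 hd (lt_of_lt_of_le ha hs.1) x)
      · exact term_summable hlam0 hlam1 hd hb
      · intro x s hs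
        have hspos : 0 < s := lt_of_lt_of_le ha hs.1
        rw [Real.norm_of_nonneg (term_pos hlam0 hlam1 hd hspos x).le]
        exact term_mono hlam0 hlam1 hd hspos hs.2 x
    exact this.congr fun s _ => F_eq lam d s
  · rw [Set.Icc_eq_empty (not_le.mpr hab)]
    exact continuousOn_empty _

/-- Upper bound on each term: `term x ≤ (d·λ·s/c)^(x+1)`. -/
lemma term_le {s : ℝ} (hs : 0 < s) (x : ℕ) :
    term lam d s x ≤ ((d : ℝ) * lam * s / (lam * ((d : ℝ) - 1))) ^ (x + 1) := by
  have hcpos := hc (d := d) hlam0 hlam1 hd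
  have hrpos := hr hlam0 hlam1 hd
  have hq : (0 : ℝ) < lam * ((d : ℝ) - 1) / s := by positivity
  have hPge : (lam * ((d : ℝ) - 1) / s) ^ (x + 1) ≤
      ∏ l ∈ Finset.Icc 1 (x + 1), (1 + lam * ((d : ℝ) - 1) * (l : ℝ) / s) := by
    have : ∏ _l ∈ Finset.Icc 1 (x + 1), (lam * ((d : ℝ) - 1) / s) ≤
        ∏ l ∈ Finset.Icc 1 (x + 1), (1 + lam * ((d : ℝ) - 1) * (l : ℝ) / s) := by
      apply Finset.prod_le_prod (fun l _ => hq.le)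
      intro l hl
      rw [Finset.mem_Icc] at hl
      have hl1 : (1 : ℝ) ≤ (l : ℝ) := by exact_mod_cast hl.1
      have h1 : lam * ((d : ℝ) - 1) / s ≤ lam * ((d : ℝ) - 1) * (l : ℝ) / s := by
        rw [div_le_div_iff₀ hs hs]
        nlinarith [mul_pos hcpos hs]
      linarith
    simpa [Finset.prod_const, Nat.card_Icc, div_pow] using this
  have h2 : term lam d s x ≤
      ((d : ℝ) * lam) ^ (x + 1) / (lam * ((d : ℝ) - 1) / s) ^ (x + 1) := by
    unfold term
    exact div_le_div_of_nonneg_left (pow_pos hrpos _).le (pow_pos hq _) hPge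
  calc term lam d s x ≤ ((d : ℝ) * lam) ^ (x + 1) / (lam * ((d : ℝ) - 1) / s) ^ (x + 1) := h2
    _ = ((d : ℝ) * lam * s / (lam * ((d : ℝ) - 1))) ^ (x + 1) := by
        rw [← div_pow]
        congr 1
        field_simp
    _ = ((d : ℝ) * lam * s / (lam * ((d : ℝ) - 1))) ^ (x + 1) := rfl

/-- At `s₀ = c/(2d)`, `F` is at most `(λ/2)/(1−λ/2) < λ/(1−λ)`. -/
lemma F_small :
    F lam d (lam * ((d : ℝ) - 1) / (2 * d)) ≤ (lam / 2) / (1 - lam / 2) := by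
  have hcpos := hc (d := d) hlam0 hlam1 hd
  have hdpos : (0 : ℝ) < d := by positivity
  set s₀ : ℝ := lam * ((d : ℝ) - 1) / (2 * d) with hs₀def
  have hs₀ : 0 < s₀ := by positivity
  have hkey : (d : ℝ) * lam * s₀ / (lam * ((d : ℝ) - 1)) = lam / 2 := by
    have hd1 : (d : ℝ) - 1 ≠ 0 := by
      have : (2 : ℝ) ≤ (d : ℝ) := by exact_mod_cast hd
      linarith
    rw [hs₀def]; field_simp
  have hgeom : Summable (fun x : ℕ => (lam / 2) ^ (x + 1)) := by
    apply Summable.comp_injective (summable_geometric_of_lt_one (by linarith) (by linarith))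
      (add_left_injective 1)
  have hsum : ∑' x : ℕ, (lam / 2) ^ (x + 1) = (lam / 2) / (1 - lam / 2) := by
    have h1 : ∑' x : ℕ, (lam / 2) ^ (x + 1) = (lam / 2) * ∑' x : ℕ, (lam / 2) ^ x := by
      rw [← tsum_mul_left]
      congr 1; funext x; rw [pow_succ]; ring
    rw [h1, tsum_geometric_of_lt_one (by linarith) (by linarith)]
    field_simp
  rw [F_eq, ← hsum]
  apply Summable.tsum_le_tsum _ (term_summable hlam0 hlam1 hd hs₀) hgeom
  intro x
  have := term_le hlam0 hlam1 hd hs₀ x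
  rwa [hkey] at this

/-- Some partial sum of the pure geometric series `∑ (dλ)^(x+1)` exceeds `λ/(1−λ)`. -/
lemma exists_partial_big :
    ∃ N : ℕ, lam / (1 - lam) < ∑ x ∈ Finset.range N, ((d : ℝ) * lam) ^ (x + 1) := by
  have hrpos := hr (d := d) hlam0 hlam1 hd
  have hd2 : (2 : ℝ) ≤ (d : ℝ) := by exact_mod_cast hd
  set r : ℝ := (d : ℝ) * lam with hrdef
  rcases lt_or_ge r 1 with hr1 | hr1
  · -- geometric sum converges to r/(1-r) > λ/(1-λ)
    have hgt : lam / (1 - lam) < r / (1 - r) := by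
      rw [div_lt_div_iff₀ (by linarith) (by linarith)]
      nlinarith
    have hHasSum : HasSum (fun x : ℕ => r ^ (x + 1)) (r / (1 - r)) := by
      have h0 : HasSum (fun x : ℕ => r ^ x) (1 - r)⁻¹ :=
        hasSum_geometric_of_lt_one hrpos.le hr1
      have := h0.mul_left r
      have heq : (fun x : ℕ => r * r ^ x) = fun x : ℕ => r ^ (x + 1) := by
        funext x; rw [pow_succ]; ring
      rw [heq] at this
      simpa [div_eq_mul_inv] using this
    have htend := hHasSum.tendsto_sum_nat
    have := htend.eventually (eventually_gt_nhds hgt)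
    rcases this.exists with ⟨N, hN⟩
    exact ⟨N, hN⟩
  · -- each term is at least 1, so partial sums grow without bound
    refine ⟨⌈lam / (1 - lam)⌉₊ + 1, ?_⟩
    have hterm : ∀ x ∈ Finset.range (⌈lam / (1 - lam)⌉₊ + 1), (1 : ℝ) ≤ r ^ (x + 1) :=
      fun x _ => one_le_pow₀ hr1
    have hsum : ((⌈lam / (1 - lam)⌉₊ + 1 : ℕ) : ℝ) ≤
        ∑ x ∈ Finset.range (⌈lam / (1 - lam)⌉₊ + 1), r ^ (x + 1) := by
      calc ((⌈lam / (1 - lam)⌉₊ + 1 : ℕ) : ℝ)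
          = ∑ _x ∈ Finset.range (⌈lam / (1 - lam)⌉₊ + 1), (1 : ℝ) := by
            simp
        _ ≤ _ := Finset.sum_le_sum hterm
    have : lam / (1 - lam) < ((⌈lam / (1 - lam)⌉₊ + 1 : ℕ) : ℝ) := by
      push_cast
      have := Nat.le_ceil (lam / (1 - lam))
      linarith
    linarith

/-- For large `s`, `F s` exceeds `λ/(1−λ)`. -/
lemma F_big (a : ℝ) : ∃ b : ℝ, a ≤ b ∧ 0 < b ∧ lam / (1 - lam) < F lam d b := by
  obtain ⟨N, hN⟩ := exists_partial_big (d := d) hlam0 hlam1 hd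
  have hcpos := hc (d := d) hlam0 hlam1 hd
  -- partial sums of term converge to partial sums of the geometric series as s → ∞
  have htend : Tendsto (fun s => ∑ x ∈ Finset.range N, term lam d s x) atTop
      (nhds (∑ x ∈ Finset.range N, ((d : ℝ) * lam) ^ (x + 1))) := by
    apply tendsto_finset_sum
    intro x _
    have hP : Tendsto
        (fun s => ∏ l ∈ Finset.Icc 1 (x + 1), (1 + lam * ((d : ℝ) - 1) * (l : ℝ) / s))
        atTop (nhds 1) := by
      have : Tendsto
          (fun s => ∏ l ∈ Finset.Icc 1 (x + 1), (1 + lam * ((d : ℝ) - 1) * (l : ℝ) / s))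
          atTop (nhds (∏ _l ∈ Finset.Icc 1 (x + 1), (1 : ℝ))) := by
        apply tendsto_finset_prod
        intro l _
        have h0 : Tendsto (fun s : ℝ => lam * ((d : ℝ) - 1) * (l : ℝ) / s) atTop (nhds 0) :=
          Tendsto.div_atTop tendsto_const_nhds tendsto_id
        have := tendsto_const_nhds.add h0 (α := ℝ) (f := fun _ : ℝ => (1 : ℝ))
        simpa using this
      simpa using this
    have := (tendsto_const_nhds (x := ((d : ℝ) * lam) ^ (x + 1)) (f := atTop (α := ℝ))).div
      hP one_ne_zero
    simpa [term, Pi.div_def] using this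
  have hev : ∀ᶠ s in atTop,
      lam / (1 - lam) < ∑ x ∈ Finset.range N, term lam d s x :=
    htend.eventually (eventually_gt_nhds hN)
  have hev2 : ∀ᶠ s : ℝ in atTop, max a 1 ≤ s := eventually_ge_atTop _
  rcases (hev.and hev2).exists with ⟨b, hb1, hb2⟩
  have hbpos : 0 < b := lt_of_lt_of_le one_pos (le_trans (le_max_right a 1) hb2)
  refine ⟨b, le_trans (le_max_left a 1) hb2, hbpos, ?_⟩
  calc lam / (1 - lam) < ∑ x ∈ Finset.range N, term lam d b x := hb1
    _ ≤ ∑' x : ℕ, term lam d b x :=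
        Summable.sum_le_tsum _ (fun x _ => (term_pos hlam0 hlam1 hd hbpos x).le)
          (term_summable hlam0 hlam1 hd hbpos)
    _ = F lam d b := (F_eq lam d b).symm

end basic

end FAux

theorem F_unique_solution
    (lam : ℝ) (hlam0 : 0 < lam) (hlam1 : lam < 1) (d : ℕ) (hd : 2 ≤ d) :
    ∃! s : ℝ, 0 < s ∧ F lam d s = lam / (1 - lam) := by
  have hcpos := FAux.hc (d := d) hlam0 hlam1 hd
  have hdpos : (0 : ℝ) < d := by
    have : (2 : ℝ) ≤ (d : ℝ) := by exact_mod_cast hd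
    linarith
  set T : ℝ := lam / (1 - lam) with hT
  set a : ℝ := lam * ((d : ℝ) - 1) / (2 * d) with ha
  have hapos : 0 < a := by positivity
  have hFa : F lam d a ≤ (lam / 2) / (1 - lam / 2) := FAux.F_small hlam0 hlam1 hd
  have hq : (lam / 2) / (1 - lam / 2) < T := by
    rw [hT, div_lt_div_iff₀ (by linarith) (by linarith)]
    nlinarith
  have hFaT : F lam d a < T := lt_of_le_of_lt hFa hq
  obtain ⟨b, hab, hbpos, hFb⟩ := FAux.F_big (d := d) hlam0 hlam1 hd a
  -- intermediate value theorem on [a, b]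
  have hcont : ContinuousOn (F lam d) (Set.Icc a b) := FAux.F_continuousOn hlam0 hlam1 hd hapos
  have hmem : T ∈ Set.Icc (F lam d a) (F lam d b) := ⟨hFaT.le, hFb.le⟩
  obtain ⟨s, hs_mem, hs_eq⟩ := intermediate_value_Icc hab hcont hmem
  have hspos : 0 < s := lt_of_lt_of_le hapos hs_mem.1
  refine ⟨s, ⟨hspos, hs_eq⟩, ?_⟩
  intro t ⟨htpos, htF⟩
  by_contra hne
  rcases lt_or_gt_of_ne hne with hlt | hlt
  · have := FAux.F_strictMonoOn hlam0 hlam1 hd (Set.mem_Ioi.mpr htpos)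
      (Set.mem_Ioi.mpr hspos) hlt
    rw [htF, hs_eq] at this
    exact lt_irrefl _ this
  · have := FAux.F_strictMonoOn hlam0 hlam1 hd (Set.mem_Ioi.mpr hspos)
      (Set.mem_Ioi.mpr htpos) hlt
    rw [htF, hs_eq] at this
    exact lt_irrefl _ this
end

section
/- For all reals a > 0 and b > 0, the series ∑_{x≥1} a^x / ∏_{ℓ=1}^{x} (1 + bℓ) converges and its sum equals (a/b)^{−1/b} · e^{a/b} · γ(1 + 1/b, a/b), where γ(s, z) = ∫_0^z t^{s−1} e^{−t} dt denotes the lower incomplete gamma function; that is, ∑_{x≥1} a^x / ∏_{ℓ=1}^{x} (1 + bℓ) = (a/b)^{−1/b} · e^{a/b} · ∫_0^{a/b} t^{1/b} · e^{−t} dt. -/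
open scoped BigOperators Nat

open Real Filter Topology intervalIntegral MeasureTheory Finset

lemma gamma_step (z p : ℝ) (hz : 0 < z) (hp : 0 < p) :
    ∫ t in (0:ℝ)..z, t ^ (p + 1) * Real.exp (-t)
      = (p + 1) * (∫ t in (0:ℝ)..z, t ^ p * Real.exp (-t))
        - z ^ (p + 1) * Real.exp (-z) := by
  have hcont : ∀ q : ℝ, 0 < q → Continuous fun t : ℝ => t ^ q * Real.exp (-t) := by
    intro q hq
    apply Continuous.mul _ (Real.continuous_exp.comp continuous_neg)
    exact continuous_iff_continuousAt.2 fun x =>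
      Real.continuousAt_rpow_const x q (Or.inr hq.le)
  have hint : ∀ q : ℝ, 0 < q →
      IntervalIntegrable (fun t : ℝ => t ^ q * Real.exp (-t)) MeasureTheory.volume 0 z :=
    fun q hq => ((hcont q hq).continuousOn).intervalIntegrable
  have hderiv : ∀ x ∈ Set.Ioo (0:ℝ) z,
      HasDerivAt (fun t : ℝ => t ^ (p + 1) * Real.exp (-t))
        ((p + 1) * x ^ p * Real.exp (-x) - x ^ (p + 1) * Real.exp (-x)) x := by
    intro x hx
    have h1 : HasDerivAt (fun t : ℝ => t ^ (p + 1)) ((p + 1) * x ^ p) x := by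
      have := Real.hasDerivAt_rpow_const (x := x) (p := p + 1) (Or.inl hx.1.ne')
      simpa using this
    have h2 : HasDerivAt (fun t : ℝ => Real.exp (-t)) (-Real.exp (-x)) x := by
      have := (hasDerivAt_neg x).exp
      convert this using 1
      ring
    have := h1.mul h2
    exact this.congr_deriv (by ring)
  have hFTC :
      ∫ t in (0:ℝ)..z, ((p + 1) * t ^ p * Real.exp (-t) - t ^ (p + 1) * Real.exp (-t))
        = z ^ (p + 1) * Real.exp (-z) - (0:ℝ) ^ (p + 1) * Real.exp (-(0:ℝ)) := by
    apply intervalIntegral.integral_eq_sub_of_hasDerivAt_of_le hz.le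
    · exact ((hcont (p + 1) (by positivity)).continuousOn)
    · exact hderiv
    · have h1 : IntervalIntegrable (fun t : ℝ => (p + 1) * (t ^ p * Real.exp (-t)))
          MeasureTheory.volume 0 z := (hint p hp).const_mul _
      have := h1.sub (hint (p + 1) (by positivity))
      apply this.congr
      intro t _
      beta_reduce
      ring
  rw [Real.zero_rpow (by positivity), zero_mul, sub_zero] at hFTC
  have hsplit :
      ∫ t in (0:ℝ)..z, ((p + 1) * t ^ p * Real.exp (-t) - t ^ (p + 1) * Real.exp (-t))
        = (p + 1) * (∫ t in (0:ℝ)..z, t ^ p * Real.exp (-t))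
          - ∫ t in (0:ℝ)..z, t ^ (p + 1) * Real.exp (-t) := by
    rw [← intervalIntegral.integral_const_mul]
    rw [← intervalIntegral.integral_sub ((hint p hp).const_mul _) (hint (p + 1) (by positivity))]
    congr 1
    ext t
    ring
  rw [hsplit] at hFTC
  linarith

theorem sum_eq_lower_incomplete_gamma (a b : ℝ) (ha : 0 < a) (hb : 0 < b) :
    Summable (fun x : ℕ => a ^ (x + 1) /
      ∏ l ∈ Finset.Icc 1 (x + 1), (1 + b * (l : ℝ))) ∧
    (∑' x : ℕ, a ^ (x + 1) / ∏ l ∈ Finset.Icc 1 (x + 1), (1 + b * (l : ℝ))) =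
      (a / b) ^ (-(1 / b)) * Real.exp (a / b) *
        ∫ t in (0 : ℝ)..(a / b), t ^ (1 / b) * Real.exp (-t) := by
  set z : ℝ := a / b with hz_def
  set c : ℝ := 1 / b with hc_def
  have hz : 0 < z := div_pos ha hb
  have hc : 0 < c := by positivity
  set f : ℕ → ℝ := fun n => ∫ t in (0:ℝ)..z, t ^ (c + n) * Real.exp (-t) with hf_def
  set P : ℕ → ℝ := fun n => ∏ l ∈ Finset.Icc 1 n, (c + (l : ℝ)) with hP_def
  have hP_pos : ∀ n, 0 < P n := by
    intro n
    apply Finset.prod_pos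
    intro l hl
    have : (0:ℝ) ≤ l := Nat.cast_nonneg l
    linarith
  have hP_succ : ∀ n : ℕ, P (n + 1) = P n * (c + (n + 1 : ℕ)) := by
    intro n
    exact Finset.prod_Icc_succ_top (Nat.succ_le_succ (Nat.zero_le n)) _
  -- term equality
  have hterm : ∀ x : ℕ, a ^ (x + 1) / ∏ l ∈ Finset.Icc 1 (x + 1), (1 + b * (l : ℝ))
      = z ^ (x + 1) / P (x + 1) := by
    intro x
    have hprod : ∏ l ∈ Finset.Icc 1 (x + 1), (1 + b * (l : ℝ))
        = b ^ (x + 1) * P (x + 1) := by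
      have : ∀ l ∈ Finset.Icc 1 (x + 1), (1 + b * (l : ℝ)) = b * (c + (l : ℝ)) := by
        intro l _
        field_simp [hc_def]
        rw [hc_def, mul_add, mul_one_div_cancel hb.ne']
      rw [Finset.prod_congr rfl this, Finset.prod_mul_distrib, Finset.prod_const,
        Nat.card_Icc]
      simp [hP_def]
    rw [hprod, hz_def, div_pow, div_div]
  -- recurrence
  have hrec : ∀ n : ℕ, f (n + 1) = (c + n + 1) * f n - z ^ (c + n + 1) * Real.exp (-z) := by
    intro n
    have := gamma_step z (c + n) hz (by positivity)
    have hcast : c + ((n : ℝ) + 1) = c + (n + 1 : ℕ) := by push_cast; ring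
    simp only [hf_def]
    push_cast
    rw [show c + ((n:ℝ) + 1) = c + (n:ℝ) + 1 by ring]
    exact this
  -- key identity
  have key : ∀ n : ℕ, f n
      = (f 0 - Real.exp (-z) * z ^ c * ∑ x ∈ Finset.range n, z ^ (x + 1) / P (x + 1)) * P n := by
    intro n
    induction n with
    | zero => simp [hP_def]
    | succ n ih =>
      rw [hrec n, ih, Finset.sum_range_succ, hP_succ n]
      have hPn1 : P (n + 1) ≠ 0 := (hP_pos (n + 1)).ne'
      have hzc : z ^ c * z ^ (n + 1 : ℕ) = z ^ (c + n + 1) := by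
        rw [← Real.rpow_natCast z (n + 1), ← Real.rpow_add hz]
        push_cast
        ring_nf
      rw [← hzc]
      have h1 : P n ≠ 0 := (hP_pos n).ne'
      have h2 : c + ((n : ℝ) + 1) ≠ 0 := by positivity
      push_cast
      field_simp
      ring
  -- nonnegativity and bound of f
  have hf_nonneg : ∀ n : ℕ, 0 ≤ f n := by
    intro n
    apply intervalIntegral.integral_nonneg hz.le
    intro t ht
    have h0 : 0 ≤ t := ht.1
    positivity
  have hcont : ∀ q : ℝ, 0 < q → Continuous fun t : ℝ => t ^ q * Real.exp (-t) := by
    intro q hq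
    apply Continuous.mul _ (Real.continuous_exp.comp continuous_neg)
    exact continuous_iff_continuousAt.2 fun x =>
      Real.continuousAt_rpow_const x q (Or.inr hq.le)
  have hf_le : ∀ n : ℕ, f n ≤ z ^ c * z ^ (n + 1) := by
    intro n
    have hle : f n ≤ ∫ _t in (0:ℝ)..z, z ^ (c + (n:ℝ)) := by
      apply intervalIntegral.integral_mono_on hz.le
        ((hcont (c + n) (by positivity)).continuousOn.intervalIntegrable)
        (intervalIntegrable_const)
      intro t ht
      have h1 : t ^ (c + (n:ℝ)) ≤ z ^ (c + (n:ℝ)) :=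
        Real.rpow_le_rpow ht.1 ht.2 (by positivity)
      have h2 : Real.exp (-t) ≤ 1 := Real.exp_le_one_iff.2 (by linarith [ht.1])
      calc t ^ (c + (n:ℝ)) * Real.exp (-t) ≤ z ^ (c + (n:ℝ)) * 1 := by
            apply mul_le_mul h1 h2 (Real.exp_pos _).le (by positivity)
        _ = z ^ (c + (n:ℝ)) := mul_one _
    have heq : ∫ _t in (0:ℝ)..z, z ^ (c + (n:ℝ)) = z ^ c * z ^ (n + 1) := by
      rw [intervalIntegral.integral_const, smul_eq_mul, sub_zero,
        Real.rpow_add hz, Real.rpow_natCast]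
      ring
    linarith [hle, heq.ge]
  have hP_ge : ∀ n : ℕ, (n ! : ℝ) ≤ P n := by
    intro n
    induction n with
    | zero => simp [hP_def]
    | succ n ih =>
      rw [hP_succ n]
      have h1 : ((n + 1 : ℕ) : ℝ) ≤ c + ((n + 1 : ℕ) : ℝ) := by linarith
      calc ((n + 1)! : ℝ) = (n ! : ℝ) * ((n + 1 : ℕ) : ℝ) := by
            push_cast [Nat.factorial_succ]; ring
        _ ≤ P n * (c + ((n + 1 : ℕ) : ℝ)) := by
            apply mul_le_mul ih h1 (by positivity) (hP_pos n).le
  have hratio : Filter.Tendsto (fun n => f n / P n) Filter.atTop (nhds 0) := by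
    have hub : ∀ n : ℕ, f n / P n ≤ (z ^ c * z) * (z ^ n / n !) := by
      intro n
      have h1 : f n / P n ≤ (z ^ c * z ^ (n + 1)) / (n !) := by
        apply div_le_div₀ (by positivity) (hf_le n)
          (by exact_mod_cast Nat.factorial_pos n) (hP_ge n)
      calc f n / P n ≤ (z ^ c * z ^ (n + 1)) / (n !) := h1
        _ = (z ^ c * z) * (z ^ n / n !) := by rw [pow_succ]; ring
    have hlb : ∀ n : ℕ, 0 ≤ f n / P n := fun n =>
      div_nonneg (hf_nonneg n) (hP_pos n).le
    have hmaj : Filter.Tendsto (fun n : ℕ => (z ^ c * z) * (z ^ n / n !))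
        Filter.atTop (nhds 0) := by
      have := (Real.summable_pow_div_factorial z).tendsto_atTop_zero
      simpa using this.const_mul (z ^ c * z)
    exact tendsto_of_tendsto_of_tendsto_of_le_of_le tendsto_const_nhds hmaj hlb hub
  -- solve for partial sums
  have hEZ : Real.exp (-z) * z ^ c ≠ 0 := by positivity
  have hS : ∀ n : ℕ, ∑ x ∈ Finset.range n, z ^ (x + 1) / P (x + 1)
      = (f 0 - f n / P n) / (Real.exp (-z) * z ^ c) := by
    intro n
    have h1 : f n / P n = f 0 - Real.exp (-z) * z ^ c
        * ∑ x ∈ Finset.range n, z ^ (x + 1) / P (x + 1) := by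
      rw [key n, mul_div_assoc, div_self (hP_pos n).ne', mul_one]
    rw [h1]
    field_simp
    ring
  set L : ℝ := f 0 / (Real.exp (-z) * z ^ c) with hL_def
  have hlim : Filter.Tendsto (fun n => ∑ x ∈ Finset.range n, z ^ (x + 1) / P (x + 1))
      Filter.atTop (nhds L) := by
    simp_rw [hS]
    have : Filter.Tendsto (fun n => f 0 - f n / P n) Filter.atTop (nhds (f 0 - 0)) :=
      tendsto_const_nhds.sub hratio
    rw [sub_zero] at this
    exact this.div_const _
  have hsum : HasSum (fun x : ℕ => z ^ (x + 1) / P (x + 1)) L := by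
    rw [hasSum_iff_tendsto_nat_of_nonneg
      (fun x => div_nonneg (by positivity) (hP_pos (x + 1)).le)]
    exact hlim
  have hfunext : (fun x : ℕ => a ^ (x + 1) /
      ∏ l ∈ Finset.Icc 1 (x + 1), (1 + b * (l : ℝ)))
      = fun x : ℕ => z ^ (x + 1) / P (x + 1) := funext hterm
  have hf0 : f 0 = ∫ t in (0:ℝ)..z, t ^ c * Real.exp (-t) := by
    simp [hf_def]
  constructor
  · rw [hfunext]; exact hsum.summable
  · rw [hfunext, hsum.tsum_eq, hL_def, hf0]
    rw [Real.exp_neg, Real.rpow_neg hz.le]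
    have h1 : z ^ c ≠ 0 := by positivity
    have h2 : Real.exp z ≠ 0 := (Real.exp_pos z).ne'
    field_simp
end

section
/- Let 0 < λ < 1 and let π be an admissible pair configuration. Then the double series ∑_{x≥1} ∑_{y≥1} R(x,y) converges absolutely and ∑_{x≥1} ∑_{y≥1} R(x,y) = λ − 2·∑_{x≥1} π(x)/x. -/
open scoped BigOperators

/-- `π(x) = ∑_{y≥1} π(x,y)`, the row sum of a pair configuration. -/
noncomputable def rowSum (p : ℕ → ℕ → ℝ) (x : ℕ) : ℝ := ∑' y : ℕ, p x (y + 1)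

/-- An admissible pair configuration: nonnegative, symmetric, vanishing when an
index is `0` (the boundary convention), with finite first moment and positive
row sums. -/
def AdmissiblePair (p : ℕ → ℕ → ℝ) : Prop :=
  (∀ x y, 0 ≤ p x y) ∧ (∀ x y, p x y = p y x) ∧
    (∀ y, p 0 y = 0) ∧ (∀ x, p x 0 = 0) ∧
    Summable (fun xy : ℕ × ℕ => ((xy.1 : ℝ) + 1) * p (xy.1 + 1) (xy.2 + 1)) ∧
    (∀ x : ℕ, 1 ≤ x → 0 < rowSum p x)

/-- `h(x) = (x−1)·∑_{y≥1} π(x,y)/(y·π(x))`. -/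
noncomputable def hPS (p : ℕ → ℕ → ℝ) (x : ℕ) : ℝ :=
  ((x : ℝ) - 1) * ∑' y : ℕ, p x (y + 1) / (((y : ℝ) + 1) * rowSum p x)

/-- `q(x) = 2π(x)/x` for `x ≥ 1` and `q(0) = 1 − ∑_{x≥1} q(x)`. -/
noncomputable def qPS (p : ℕ → ℕ → ℝ) (x : ℕ) : ℝ :=
  if x = 0 then 1 - ∑' z : ℕ, 2 * rowSum p (z + 1) / ((z : ℝ) + 1)
  else 2 * rowSum p x / (x : ℝ)

/-- The PS pair drift `R(x,y)`, for `x, y ≥ 1`. -/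
noncomputable def RPS (lam : ℝ) (p : ℕ → ℕ → ℝ) (x y : ℕ) : ℝ :=
  lam * qPS p (x - 1) * qPS p (y - 1)
    + 2 * lam * (p (x - 1) y + p x (y - 1) - 2 * p x y)
    + p (x + 1) y * (hPS p (x + 1) + (x : ℝ) / ((x : ℝ) + 1))
    + p x (y + 1) * (hPS p (y + 1) + (y : ℝ) / ((y : ℝ) + 1))
    - p x y * (2 + hPS p x + hPS p y)

/-- Shifting the first coordinate in a double series whose `x = 0` row vanishes. -/
lemma shift_fst_aux (f : ℕ × ℕ → ℝ) (h0 : ∀ y, f (0, y) = 0) :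
    (Summable (fun xy : ℕ × ℕ => f (xy.1 + 1, xy.2)) ↔ Summable f) ∧
      (∑' xy : ℕ × ℕ, f (xy.1 + 1, xy.2)) = ∑' xy : ℕ × ℕ, f xy := by
  have hi : Function.Injective (fun xy : ℕ × ℕ => ((xy.1 + 1, xy.2) : ℕ × ℕ)) := by
    rintro ⟨a, b⟩ ⟨c, d⟩ h
    simp only [Prod.mk.injEq] at h
    exact Prod.ext (by omega) h.2
  have hr : ∀ z : ℕ × ℕ,
      z ∉ Set.range (fun xy : ℕ × ℕ => ((xy.1 + 1, xy.2) : ℕ × ℕ)) → f z = 0 := by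
    rintro ⟨a, b⟩ hz
    match a with
    | 0 => exact h0 b
    | Nat.succ n => exact absurd ⟨(n, b), rfl⟩ hz
  refine ⟨hi.summable_iff hr, hi.tsum_eq ?_⟩
  intro z hz
  by_contra h
  exact hz (hr z h)

/-- Shifting the second coordinate in a double series whose `y = 0` column vanishes. -/
lemma shift_snd_aux (f : ℕ × ℕ → ℝ) (h0 : ∀ x, f (x, 0) = 0) :
    (Summable (fun xy : ℕ × ℕ => f (xy.1, xy.2 + 1)) ↔ Summable f) ∧
      (∑' xy : ℕ × ℕ, f (xy.1, xy.2 + 1)) = ∑' xy : ℕ × ℕ, f xy := by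
  have hi : Function.Injective (fun xy : ℕ × ℕ => ((xy.1, xy.2 + 1) : ℕ × ℕ)) := by
    rintro ⟨a, b⟩ ⟨c, d⟩ h
    simp only [Prod.mk.injEq] at h
    exact Prod.ext h.1 (by omega)
  have hr : ∀ z : ℕ × ℕ,
      z ∉ Set.range (fun xy : ℕ × ℕ => ((xy.1, xy.2 + 1) : ℕ × ℕ)) → f z = 0 := by
    rintro ⟨a, b⟩ hz
    match b with
    | 0 => exact h0 a
    | Nat.succ n => exact absurd ⟨(a, n), rfl⟩ hz
  refine ⟨hi.summable_iff hr, hi.tsum_eq ?_⟩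
  intro z hz
  by_contra h
  exact hz (hr z h)

theorem ps_pair_drift_total_sum
    (lam : ℝ) (hlam0 : 0 < lam) (hlam1 : lam < 1)
    (p : ℕ → ℕ → ℝ) (hp : AdmissiblePair p) :
    Summable (fun xy : ℕ × ℕ => |RPS lam p (xy.1 + 1) (xy.2 + 1)|) ∧
    (∑' xy : ℕ × ℕ, RPS lam p (xy.1 + 1) (xy.2 + 1)) =
      lam - 2 * ∑' x : ℕ, rowSum p (x + 1) / ((x : ℝ) + 1) := by
  obtain ⟨hnn, hsym, h0l, h0r, hM, hrowpos⟩ := hp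
  -- basic summabilities
  have hP : Summable (fun xy : ℕ × ℕ => p (xy.1 + 1) (xy.2 + 1)) := by
    refine Summable.of_nonneg_of_le (fun xy => hnn _ _) (fun xy => ?_) hM
    have h1 : (0:ℝ) ≤ (xy.1 : ℝ) := Nat.cast_nonneg _
    nlinarith [hnn (xy.1 + 1) (xy.2 + 1)]
  have hMy : Summable (fun xy : ℕ × ℕ => ((xy.2 : ℝ) + 1) * p (xy.1 + 1) (xy.2 + 1)) := by
    have := hM.prod_symm
    exact this.congr (fun xy => by
      simp only [Prod.fst_swap, Prod.snd_swap]
      rw [hsym])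
  have hrow1 : ∀ x : ℕ, Summable (fun y : ℕ => p (x + 1) (y + 1)) := fun x => hP.prod_factor x
  have hrow_nonneg : ∀ x : ℕ, 0 ≤ rowSum p x :=
    fun x => tsum_nonneg (fun y => hnn _ _)
  have hrowS : Summable (fun x : ℕ => rowSum p (x + 1)) := by
    have h := (summable_prod_of_nonneg (fun xy => hnn (xy.1 + 1) (xy.2 + 1))).mp hP
    exact h.2
  -- bounds on hPS
  have hh : ∀ x : ℕ, 0 ≤ hPS p (x + 1) ∧ hPS p (x + 1) ≤ (x : ℝ) := by
    intro x
    have hπ : 0 < rowSum p (x + 1) := hrowpos (x + 1) (Nat.le_add_left 1 x)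
    have hterm : ∀ y : ℕ, 0 ≤ p (x + 1) (y + 1) / (((y : ℝ) + 1) * rowSum p (x + 1)) :=
      fun y => div_nonneg (hnn _ _) (by positivity)
    have hcomp : ∀ y : ℕ,
        p (x + 1) (y + 1) / (((y : ℝ) + 1) * rowSum p (x + 1))
          ≤ p (x + 1) (y + 1) / rowSum p (x + 1) := by
      intro y
      gcongr
      · exact hnn _ _
      · nlinarith [Nat.cast_nonneg (α := ℝ) y]
    have hsy : Summable (fun y : ℕ => p (x + 1) (y + 1) / rowSum p (x + 1)) :=
      (hrow1 x).div_const _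
    have hsy' : Summable
        (fun y : ℕ => p (x + 1) (y + 1) / (((y : ℝ) + 1) * rowSum p (x + 1))) :=
      Summable.of_nonneg_of_le hterm hcomp hsy
    have hT0 : 0 ≤ ∑' y : ℕ, p (x + 1) (y + 1) / (((y : ℝ) + 1) * rowSum p (x + 1)) :=
      tsum_nonneg hterm
    have hT1 : (∑' y : ℕ, p (x + 1) (y + 1) / (((y : ℝ) + 1) * rowSum p (x + 1))) ≤ 1 := by
      calc (∑' y : ℕ, p (x + 1) (y + 1) / (((y : ℝ) + 1) * rowSum p (x + 1)))
          ≤ ∑' y : ℕ, p (x + 1) (y + 1) / rowSum p (x + 1) := Summable.tsum_le_tsum hcomp hsy' hsy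
        _ = rowSum p (x + 1) / rowSum p (x + 1) := by rw [tsum_div_const]; rfl
        _ = 1 := div_self hπ.ne'
    have hcast : ((x + 1 : ℕ) : ℝ) - 1 = (x : ℝ) := by push_cast; ring
    constructor
    · unfold hPS
      rw [hcast]
      exact mul_nonneg (Nat.cast_nonneg _) hT0
    · unfold hPS
      rw [hcast]
      calc (x : ℝ) * ∑' y : ℕ, p (x + 1) (y + 1) / (((y : ℝ) + 1) * rowSum p (x + 1))
          ≤ (x : ℝ) * 1 := mul_le_mul_of_nonneg_left hT1 (Nat.cast_nonneg _)
        _ = (x : ℝ) := mul_one _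
  have hh1 : hPS p 1 = 0 := by simp [hPS]
  -- q facts
  have hq1 : ∀ x : ℕ, qPS p (x + 1) = 2 * rowSum p (x + 1) / ((x : ℝ) + 1) := by
    intro x
    simp only [qPS, Nat.succ_ne_zero, if_false]
    push_cast
    ring
  have hqsum' : Summable (fun x : ℕ => 2 * rowSum p (x + 1) / ((x : ℝ) + 1)) := by
    refine Summable.of_nonneg_of_le
      (fun x => by have := hrow_nonneg (x + 1); positivity)
      (fun x => ?_) (hrowS.mul_left 2)
    refine div_le_self (by have := hrow_nonneg (x + 1); positivity) ?_
    nlinarith [Nat.cast_nonneg (α := ℝ) x]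
  have hqsum : Summable (qPS p) := by
    refine (summable_nat_add_iff 1).mp ?_
    exact hqsum'.congr (fun x => (hq1 x).symm)
  have hqtot : (∑' x : ℕ, qPS p x) = 1 := by
    have h2 : (∑' x : ℕ, qPS p (x + 1)) = ∑' z : ℕ, 2 * rowSum p (z + 1) / ((z : ℝ) + 1) :=
      tsum_congr hq1
    rw [Summable.tsum_eq_zero_add hqsum, h2]
    simp only [qPS, if_true]
    ring
  -- the A piece
  have hqnorm : Summable (fun x : ℕ => ‖qPS p x‖) := by
    simpa [Real.norm_eq_abs] using hqsum.abs
  have hqmul : Summable (fun xy : ℕ × ℕ => qPS p xy.1 * qPS p xy.2) :=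
    Summable.of_norm (Summable.mul_norm hqnorm hqnorm)
  have hA : Summable (fun xy : ℕ × ℕ => lam * (qPS p xy.1 * qPS p xy.2)) := hqmul.mul_left lam
  have hAtsum : (∑' xy : ℕ × ℕ, lam * (qPS p xy.1 * qPS p xy.2)) = lam := by
    rw [tsum_mul_left, ← tsum_mul_tsum_of_summable_norm hqnorm hqnorm, hqtot]
    ring
  -- the B pieces
  have hB1 := shift_fst_aux (fun xy => p xy.1 (xy.2 + 1)) (fun y => h0l (y + 1))
  have hB2 := shift_snd_aux (fun xy => p (xy.1 + 1) xy.2) (fun x => h0r (x + 1))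
  have hB1s : Summable (fun xy : ℕ × ℕ => p xy.1 (xy.2 + 1)) := hB1.1.mp hP
  have hB2s : Summable (fun xy : ℕ × ℕ => p (xy.1 + 1) xy.2) := hB2.1.mp hP
  have hB : Summable (fun xy : ℕ × ℕ =>
      2 * lam * (p xy.1 (xy.2 + 1) + p (xy.1 + 1) xy.2 - 2 * p (xy.1 + 1) (xy.2 + 1))) :=
    (((hB1s.add hB2s).sub (hP.mul_left 2))).mul_left (2 * lam)
  have hB1e : (∑' xy : ℕ × ℕ, p (xy.1 + 1) (xy.2 + 1)) = ∑' xy : ℕ × ℕ, p xy.1 (xy.2 + 1) :=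
    hB1.2
  have hB2e : (∑' xy : ℕ × ℕ, p (xy.1 + 1) (xy.2 + 1)) = ∑' xy : ℕ × ℕ, p (xy.1 + 1) xy.2 :=
    hB2.2
  have hBtsum : (∑' xy : ℕ × ℕ,
      2 * lam * (p xy.1 (xy.2 + 1) + p (xy.1 + 1) xy.2 - 2 * p (xy.1 + 1) (xy.2 + 1))) = 0 := by
    rw [tsum_mul_left, Summable.tsum_sub (hB1s.add hB2s) (hP.mul_left 2), Summable.tsum_add hB1s hB2s,
      tsum_mul_left, ← hB1e, ← hB2e]
    ring
  -- the F pieces (telescoping)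
  set F : ℕ × ℕ → ℝ := fun xy =>
    p (xy.1 + 1) (xy.2 + 1) * (hPS p (xy.1 + 1) + (xy.1 : ℝ) / ((xy.1 : ℝ) + 1)) with hFdef
  set G : ℕ × ℕ → ℝ := fun xy =>
    p (xy.1 + 1) (xy.2 + 1) * (hPS p (xy.2 + 1) + (xy.2 : ℝ) / ((xy.2 : ℝ) + 1)) with hGdef
  have hFbound : ∀ xy : ℕ × ℕ, 0 ≤ F xy ∧ F xy ≤ ((xy.1 : ℝ) + 1) * p (xy.1 + 1) (xy.2 + 1) := by
    intro xy
    obtain ⟨hh0, hhle⟩ := hh xy.1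
    have hpn := hnn (xy.1 + 1) (xy.2 + 1)
    have hx0 : (0:ℝ) ≤ (xy.1 : ℝ) := Nat.cast_nonneg _
    have hd : (xy.1 : ℝ) / ((xy.1 : ℝ) + 1) ≤ 1 := by
      rw [div_le_one (by positivity)]; linarith
    have hd0 : 0 ≤ (xy.1 : ℝ) / ((xy.1 : ℝ) + 1) := by positivity
    constructor
    · exact mul_nonneg hpn (by linarith)
    · simp only [hFdef]
      nlinarith
  have hGbound : ∀ xy : ℕ × ℕ, 0 ≤ G xy ∧ G xy ≤ ((xy.2 : ℝ) + 1) * p (xy.1 + 1) (xy.2 + 1) := by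
    intro xy
    obtain ⟨hh0, hhle⟩ := hh xy.2
    have hpn := hnn (xy.1 + 1) (xy.2 + 1)
    have hy0 : (0:ℝ) ≤ (xy.2 : ℝ) := Nat.cast_nonneg _
    have hd : (xy.2 : ℝ) / ((xy.2 : ℝ) + 1) ≤ 1 := by
      rw [div_le_one (by positivity)]; linarith
    have hd0 : 0 ≤ (xy.2 : ℝ) / ((xy.2 : ℝ) + 1) := by positivity
    constructor
    · exact mul_nonneg hpn (by linarith)
    · simp only [hGdef]
      nlinarith
  have hFs : Summable F :=
    Summable.of_nonneg_of_le (fun xy => (hFbound xy).1) (fun xy => (hFbound xy).2) hM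
  have hGs : Summable G :=
    Summable.of_nonneg_of_le (fun xy => (hGbound xy).1) (fun xy => (hGbound xy).2) hMy
  have hF0 : ∀ y, F (0, y) = 0 := by
    intro y; simp [hFdef, hh1]
  have hG0 : ∀ x, G (x, 0) = 0 := by
    intro x; simp [hGdef, hh1]
  have hFshift := shift_fst_aux F hF0
  have hGshift := shift_snd_aux G hG0
  have hFss : Summable (fun xy : ℕ × ℕ => F (xy.1 + 1, xy.2)) := hFshift.1.mpr hFs
  have hGss : Summable (fun xy : ℕ × ℕ => G (xy.1, xy.2 + 1)) := hGshift.1.mpr hGs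
  have hC : Summable (fun xy : ℕ × ℕ => F (xy.1 + 1, xy.2) - F xy) := hFss.sub hFs
  have hD : Summable (fun xy : ℕ × ℕ => G (xy.1, xy.2 + 1) - G xy) := hGss.sub hGs
  have hCtsum : (∑' xy : ℕ × ℕ, (F (xy.1 + 1, xy.2) - F xy)) = 0 := by
    rw [Summable.tsum_sub hFss hFs, hFshift.2, sub_self]
  have hDtsum : (∑' xy : ℕ × ℕ, (G (xy.1, xy.2 + 1) - G xy)) = 0 := by
    rw [Summable.tsum_sub hGss hGs, hGshift.2, sub_self]
  -- the E pieces
  have he1 : Summable (fun xy : ℕ × ℕ => p (xy.1 + 1) (xy.2 + 1) / ((xy.1 : ℝ) + 1)) := by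
    refine Summable.of_nonneg_of_le (fun xy => div_nonneg (hnn _ _) (by positivity))
      (fun xy => ?_) hP
    exact div_le_self (hnn _ _) (by nlinarith [Nat.cast_nonneg (α := ℝ) xy.1])
  have he2 : Summable (fun xy : ℕ × ℕ => p (xy.1 + 1) (xy.2 + 1) / ((xy.2 : ℝ) + 1)) := by
    refine Summable.of_nonneg_of_le (fun xy => div_nonneg (hnn _ _) (by positivity))
      (fun xy => ?_) hP
    exact div_le_self (hnn _ _) (by nlinarith [Nat.cast_nonneg (α := ℝ) xy.2])
  have he1tsum : (∑' xy : ℕ × ℕ, p (xy.1 + 1) (xy.2 + 1) / ((xy.1 : ℝ) + 1))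
      = ∑' x : ℕ, rowSum p (x + 1) / ((x : ℝ) + 1) := by
    rw [Summable.tsum_prod he1]
    refine tsum_congr (fun x => ?_)
    show (∑' c : ℕ, p (x + 1) (c + 1) / ((x : ℝ) + 1)) = _
    rw [tsum_div_const]
    rfl
  have he2tsum : (∑' xy : ℕ × ℕ, p (xy.1 + 1) (xy.2 + 1) / ((xy.2 : ℝ) + 1))
      = ∑' x : ℕ, rowSum p (x + 1) / ((x : ℝ) + 1) := by
    have hswap : (∑' xy : ℕ × ℕ, p (xy.1 + 1) (xy.2 + 1) / ((xy.2 : ℝ) + 1))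
        = ∑' xy : ℕ × ℕ, p (xy.1 + 1) (xy.2 + 1) / ((xy.1 : ℝ) + 1) := by
      rw [← (Equiv.prodComm ℕ ℕ).tsum_eq
        (fun xy : ℕ × ℕ => p (xy.1 + 1) (xy.2 + 1) / ((xy.1 : ℝ) + 1))]
      refine tsum_congr (fun xy => ?_)
      simp only [Equiv.prodComm_apply, Prod.fst_swap, Prod.snd_swap]
      rw [hsym]
    rw [hswap, he1tsum]
  have hE : Summable (fun xy : ℕ × ℕ =>
      p (xy.1 + 1) (xy.2 + 1) / ((xy.1 : ℝ) + 1) + p (xy.1 + 1) (xy.2 + 1) / ((xy.2 : ℝ) + 1)) :=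
    he1.add he2
  have hEtsum : (∑' xy : ℕ × ℕ,
      (p (xy.1 + 1) (xy.2 + 1) / ((xy.1 : ℝ) + 1) + p (xy.1 + 1) (xy.2 + 1) / ((xy.2 : ℝ) + 1)))
      = 2 * ∑' x : ℕ, rowSum p (x + 1) / ((x : ℝ) + 1) := by
    rw [Summable.tsum_add he1 he2, he1tsum, he2tsum]
    ring
  -- pointwise decomposition
  have key : ∀ xy : ℕ × ℕ, RPS lam p (xy.1 + 1) (xy.2 + 1) =
      lam * (qPS p xy.1 * qPS p xy.2)
      + 2 * lam * (p xy.1 (xy.2 + 1) + p (xy.1 + 1) xy.2 - 2 * p (xy.1 + 1) (xy.2 + 1))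
      + (F (xy.1 + 1, xy.2) - F xy)
      + (G (xy.1, xy.2 + 1) - G xy)
      - (p (xy.1 + 1) (xy.2 + 1) / ((xy.1 : ℝ) + 1)
          + p (xy.1 + 1) (xy.2 + 1) / ((xy.2 : ℝ) + 1)) := by
    rintro ⟨x, y⟩
    simp only [RPS, hFdef, hGdef, Nat.add_sub_cancel]
    have hx1 : ((x : ℝ) + 1) ≠ 0 := by positivity
    have hy1 : ((y : ℝ) + 1) ≠ 0 := by positivity
    have hx2 : ((x : ℝ) + 2) ≠ 0 := by positivity
    have hy2 : ((y : ℝ) + 2) ≠ 0 := by positivity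
    push_cast
    field_simp
    ring
  -- assemble
  have hRs : Summable (fun xy : ℕ × ℕ => RPS lam p (xy.1 + 1) (xy.2 + 1)) := by
    refine Summable.congr ?_ (fun xy => (key xy).symm)
    exact ((((hA.add hB).add hC).add hD).sub hE)
  constructor
  · exact hRs.abs
  · calc (∑' xy : ℕ × ℕ, RPS lam p (xy.1 + 1) (xy.2 + 1))
        = ∑' xy : ℕ × ℕ,
          (lam * (qPS p xy.1 * qPS p xy.2)
          + 2 * lam * (p xy.1 (xy.2 + 1) + p (xy.1 + 1) xy.2 - 2 * p (xy.1 + 1) (xy.2 + 1))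
          + (F (xy.1 + 1, xy.2) - F xy)
          + (G (xy.1, xy.2 + 1) - G xy)
          - (p (xy.1 + 1) (xy.2 + 1) / ((xy.1 : ℝ) + 1)
              + p (xy.1 + 1) (xy.2 + 1) / ((xy.2 : ℝ) + 1))) := tsum_congr key
      _ = lam - 2 * ∑' x : ℕ, rowSum p (x + 1) / ((x : ℝ) + 1) := by
        rw [Summable.tsum_sub (((hA.add hB).add hC).add hD) hE,
          Summable.tsum_add ((hA.add hB).add hC) hD,
          Summable.tsum_add (hA.add hB) hC,
          Summable.tsum_add hA hB,
          hAtsum, hBtsum, hCtsum, hDtsum, hEtsum]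
        ring
end

section
/- Let 0 < λ < 1 and let π be an admissible pair configuration such that R(x,y) = 0 for all x,y ≥ 1. Then 2·∑_{x≥1} π(x)/x = λ; equivalently, q(0) = 1 − λ. -/
open scoped BigOperators

/-- auxiliary: shifted pair configuration on the product. -/
noncomputable def aPS (p : ℕ → ℕ → ℝ) : ℕ × ℕ → ℝ := fun xy => p (xy.1 + 1) (xy.2 + 1)

/-- auxiliary: the drift-out term in the first coordinate. -/
noncomputable def bPS (p : ℕ → ℕ → ℝ) : ℕ × ℕ → ℝ :=
  fun xy => aPS p xy * (hPS p (xy.1 + 1) + (xy.1 : ℝ) / ((xy.1 : ℝ) + 1))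

/-- auxiliary: the drift-out term in the second coordinate. -/
noncomputable def bPS' (p : ℕ → ℕ → ℝ) : ℕ × ℕ → ℝ :=
  fun xy => aPS p xy * (hPS p (xy.2 + 1) + (xy.2 : ℝ) / ((xy.2 : ℝ) + 1))

lemma hPS_one (p : ℕ → ℕ → ℝ) : hPS p 1 = 0 := by simp [hPS]

lemma inj1 : Function.Injective (fun xy : ℕ × ℕ => (xy.1 + 1, xy.2)) := by
  rintro ⟨a, b⟩ ⟨c, d⟩ h
  simp only [Prod.mk.injEq] at h
  exact Prod.ext (by omega) h.2

lemma inj2 : Function.Injective (fun xy : ℕ × ℕ => (xy.1, xy.2 + 1)) := by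
  rintro ⟨a, b⟩ ⟨c, d⟩ h
  simp only [Prod.mk.injEq] at h
  exact Prod.ext h.1 (by omega)

lemma not_range1 {z : ℕ × ℕ} (hz : z ∉ Set.range (fun xy : ℕ × ℕ => (xy.1 + 1, xy.2))) :
    z.1 = 0 := by
  rcases z with ⟨x, y⟩
  cases x with
  | zero => rfl
  | succ n => exact absurd ⟨(n, y), rfl⟩ hz

lemma not_range2 {z : ℕ × ℕ} (hz : z ∉ Set.range (fun xy : ℕ × ℕ => (xy.1, xy.2 + 1))) :
    z.2 = 0 := by
  rcases z with ⟨x, y⟩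
  cases y with
  | zero => rfl
  | succ n => exact absurd ⟨(x, n), rfl⟩ hz

set_option maxHeartbeats 1000000 in
theorem ps_pair_fixed_point_q_zero
    (lam : ℝ) (hlam0 : 0 < lam) (hlam1 : lam < 1)
    (p : ℕ → ℕ → ℝ) (hp : AdmissiblePair p)
    (hfix : ∀ x y : ℕ, 1 ≤ x → 1 ≤ y → RPS lam p x y = 0) :
    2 * (∑' x : ℕ, rowSum p (x + 1) / ((x : ℝ) + 1)) = lam ∧
    qPS p 0 = 1 - lam := by
  obtain ⟨hpos, hsym, h0y, hx0, hsum, hrow⟩ := hp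
  have hann : ∀ xy : ℕ × ℕ, 0 ≤ aPS p xy := fun xy => hpos _ _
  have Sa : Summable (aPS p) := by
    refine Summable.of_nonneg_of_le hann (fun xy => ?_) hsum
    exact le_mul_of_one_le_left (hann xy) (le_add_of_nonneg_left (Nat.cast_nonneg _))
  have Ha : HasSum (aPS p) (∑' xy : ℕ × ℕ, aPS p xy) := Sa.hasSum
  set M : ℝ := ∑' xy : ℕ × ℕ, aPS p xy with hM
  have hSlice : ∀ x : ℕ, Summable (fun y => aPS p (x, y)) := fun x => Sa.prod_factor x
  have hu : ∀ x : ℕ, HasSum (fun y => aPS p (x, y)) (rowSum p (x + 1)) := fun x =>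
    (hSlice x).hasSum
  -- sum of a/(x+1)
  have Sdiv : Summable (fun xy : ℕ × ℕ => aPS p xy / ((xy.1 : ℝ) + 1)) := by
    refine Summable.of_nonneg_of_le (fun xy => div_nonneg (hann xy) (by positivity)) (fun xy => ?_) Sa
    exact div_le_self (hann xy) (le_add_of_nonneg_left (Nat.cast_nonneg _))
  set t : ℝ := ∑' xy : ℕ × ℕ, aPS p xy / ((xy.1 : ℝ) + 1) with ht
  have Hdiv : HasSum (fun xy : ℕ × ℕ => aPS p xy / ((xy.1 : ℝ) + 1)) t := Sdiv.hasSum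
  have Hu : HasSum (fun x : ℕ => rowSum p (x + 1) / ((x : ℝ) + 1)) t :=
    Hdiv.prod_fiberwise fun x => (hu x).div_const _
  have hsymm_fun : ((fun xy : ℕ × ℕ => aPS p xy / ((xy.2 : ℝ) + 1)) ∘
      (Equiv.prodComm ℕ ℕ)) = fun xy : ℕ × ℕ => aPS p xy / ((xy.1 : ℝ) + 1) := by
    funext ⟨x, y⟩
    simp only [Function.comp_apply, Equiv.coe_prodComm, Prod.swap_prod_mk, aPS]
    rw [hsym]
  have Hdiv2 : HasSum (fun xy : ℕ × ℕ => aPS p xy / ((xy.2 : ℝ) + 1)) t := by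
    refine ((Equiv.prodComm ℕ ℕ).hasSum_iff).mp ?_
    rw [hsymm_fun]; exact Hdiv
  -- bounds on h
  have hrowpos : ∀ x : ℕ, 0 < rowSum p (x + 1) := fun x => hrow (x + 1) (Nat.le_add_left 1 x)
  have hhb : ∀ x : ℕ, 0 ≤ hPS p (x + 1) ∧ hPS p (x + 1) ≤ (x : ℝ) := by
    intro x
    have hr := hrowpos x
    have SG : Summable (fun y : ℕ => aPS p (x, y) / rowSum p (x + 1)) :=
      (hSlice x).div_const _
    have hle : ∀ y : ℕ, p (x + 1) (y + 1) / (((y : ℝ) + 1) * rowSum p (x + 1)) ≤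
        aPS p (x, y) / rowSum p (x + 1) := by
      intro y
      refine div_le_div_of_nonneg_left (hpos _ _) hr ?_
      exact le_mul_of_one_le_left hr.le (le_add_of_nonneg_left (Nat.cast_nonneg _))
    have hnn : ∀ y : ℕ, 0 ≤ p (x + 1) (y + 1) / (((y : ℝ) + 1) * rowSum p (x + 1)) := by
      intro y
      exact div_nonneg (hpos _ _) (mul_nonneg (by positivity) hr.le)
    have Sg : Summable (fun y : ℕ => p (x + 1) (y + 1) / (((y : ℝ) + 1) * rowSum p (x + 1))) :=
      Summable.of_nonneg_of_le hnn hle SG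
    have hS0 : 0 ≤ ∑' y : ℕ, p (x + 1) (y + 1) / (((y : ℝ) + 1) * rowSum p (x + 1)) :=
      tsum_nonneg hnn
    have hS1 : (∑' y : ℕ, p (x + 1) (y + 1) / (((y : ℝ) + 1) * rowSum p (x + 1))) ≤ 1 := by
      have h1 := Summable.tsum_le_tsum hle Sg SG
      have h2 : (∑' y : ℕ, aPS p (x, y) / rowSum p (x + 1)) = 1 := by
        rw [((hu x).div_const (rowSum p (x + 1))).tsum_eq]
        exact div_self hr.ne'
      linarith
    have hval : hPS p (x + 1) =
        (x : ℝ) * ∑' y : ℕ, p (x + 1) (y + 1) / (((y : ℝ) + 1) * rowSum p (x + 1)) := by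
      simp only [hPS]
      push_cast
      ring
    constructor
    · rw [hval]; positivity
    · rw [hval]
      calc (x : ℝ) * _ ≤ (x : ℝ) * 1 := by
            exact mul_le_mul_of_nonneg_left hS1 (by positivity)
        _ = (x : ℝ) := mul_one _
  -- summability of b
  have Sb : Summable (bPS p) := by
    refine Summable.of_nonneg_of_le (fun xy => ?_) (fun xy => ?_) hsum
    · exact mul_nonneg (hann xy) (add_nonneg (hhb xy.1).1 (by positivity))
    · have h1 : hPS p (xy.1 + 1) + (xy.1 : ℝ) / ((xy.1 : ℝ) + 1) ≤ (xy.1 : ℝ) + 1 := by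
        have := (hhb xy.1).2
        have h2 : (xy.1 : ℝ) / ((xy.1 : ℝ) + 1) ≤ 1 := by
          rw [div_le_one (by positivity)]; linarith
        linarith
      calc bPS p xy ≤ aPS p xy * ((xy.1 : ℝ) + 1) :=
            mul_le_mul_of_nonneg_left h1 (hann xy)
        _ = ((xy.1 : ℝ) + 1) * aPS p xy := mul_comm _ _
  set A : ℝ := ∑' xy : ℕ × ℕ, bPS p xy with hA
  have Hb : HasSum (bPS p) A := Sb.hasSum
  have Hb' : HasSum (bPS' p) A := by
    refine ((Equiv.prodComm ℕ ℕ).hasSum_iff).mp ?_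
    have : (bPS' p ∘ (Equiv.prodComm ℕ ℕ)) = bPS p := by
      funext ⟨x, y⟩
      simp only [Function.comp_apply, Equiv.coe_prodComm, Prod.swap_prod_mk, bPS', bPS, aPS]
      rw [hsym]
    rw [this]; exact Hb
  -- the q function sums to 1
  have Hq1 : HasSum (fun z : ℕ => qPS p (z + 1)) (2 * t) := by
    have h := Hu.mul_left 2
    have he : (fun x : ℕ => 2 * (rowSum p (x + 1) / ((x : ℝ) + 1))) =
        fun z : ℕ => qPS p (z + 1) := by
      funext z
      simp only [qPS, Nat.succ_ne_zero, if_false]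
      push_cast
      ring
    rwa [he] at h
  have q0 : qPS p 0 = 1 - 2 * t := by
    have h2 : (∑' z : ℕ, 2 * rowSum p (z + 1) / ((z : ℝ) + 1)) = 2 * t := by
      have h := (Hu.mul_left 2).tsum_eq
      rw [← h]
      congr 1
      funext z
      ring
    simp [qPS, h2]
  have Hq : HasSum (qPS p) 1 := by
    refine (hasSum_nat_add_iff' 1).mp ?_
    have : (1 : ℝ) - ∑ i ∈ Finset.range 1, qPS p i = 2 * t := by
      rw [Finset.range_one, Finset.sum_singleton, q0]; ring
    rw [this]
    exact Hq1
  have Sq : Summable (qPS p) := Hq.summable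
  have Sqq : Summable (fun xy : ℕ × ℕ => qPS p xy.1 * qPS p xy.2) := by
    refine summable_abs_iff.mp ?_
    have habs : Summable (fun xy : ℕ × ℕ => |qPS p xy.1| * |qPS p xy.2|) :=
      Sq.abs.mul_of_nonneg Sq.abs (fun _ => abs_nonneg _) (fun _ => abs_nonneg _)
    simpa [abs_mul] using habs
  have H1 : HasSum (fun xy : ℕ × ℕ => lam * (qPS p xy.1 * qPS p xy.2)) lam := by
    have h := (Hq.mul Hq Sqq).mul_left lam
    simpa using h
  -- the shift terms
  have Hg1 : HasSum (fun xy : ℕ × ℕ => p xy.1 (xy.2 + 1)) M := by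
    refine (inj1.hasSum_iff (fun z hz => ?_)).mp ?_
    · rw [not_range1 hz]; exact h0y _
    · exact Ha
  have Hg2 : HasSum (fun xy : ℕ × ℕ => p (xy.1 + 1) xy.2) M := by
    refine (inj2.hasSum_iff (fun z hz => ?_)).mp ?_
    · rw [not_range2 hz]; exact hx0 _
    · exact Ha
  have H2 : HasSum (fun xy : ℕ × ℕ =>
      2 * lam * (p xy.1 (xy.2 + 1) + p (xy.1 + 1) xy.2 - 2 * aPS p xy)) 0 := by
    have h := ((Hg1.add Hg2).sub (Ha.mul_left 2)).mul_left (2 * lam)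
    rw [show (0 : ℝ) = 2 * lam * (M + M - 2 * M) by ring]
    exact h
  have H3 : HasSum (fun xy : ℕ × ℕ => bPS p (xy.1 + 1, xy.2)) A := by
    refine (inj1.hasSum_iff (fun z hz => ?_)).mpr Hb
    rcases z with ⟨x, y⟩
    have hx : x = 0 := not_range1 hz
    subst hx
    simp [bPS, hPS_one]
  have H4 : HasSum (fun xy : ℕ × ℕ => bPS' p (xy.1, xy.2 + 1)) A := by
    refine (inj2.hasSum_iff (fun z hz => ?_)).mpr Hb'
    rcases z with ⟨x, y⟩
    have hy : y = 0 := not_range2 hz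
    subst hy
    simp [bPS', hPS_one]
  have Hplus1 : HasSum (fun xy : ℕ × ℕ => aPS p xy * (1 + hPS p (xy.1 + 1))) (A + t) := by
    have h := Hb.add Hdiv
    have he : (fun xy : ℕ × ℕ => bPS p xy + aPS p xy / ((xy.1 : ℝ) + 1)) =
        fun xy : ℕ × ℕ => aPS p xy * (1 + hPS p (xy.1 + 1)) := by
      funext xy
      have hx : ((xy.1 : ℝ) + 1) ≠ 0 := by positivity
      simp only [bPS]
      field_simp
      ring
    rwa [he] at h
  have Hplus2 : HasSum (fun xy : ℕ × ℕ => aPS p xy * (1 + hPS p (xy.2 + 1))) (A + t) := by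
    have h := Hb'.add Hdiv2
    have he : (fun xy : ℕ × ℕ => bPS' p xy + aPS p xy / ((xy.2 : ℝ) + 1)) =
        fun xy : ℕ × ℕ => aPS p xy * (1 + hPS p (xy.2 + 1)) := by
      funext xy
      have hx : ((xy.2 : ℝ) + 1) ≠ 0 := by positivity
      simp only [bPS']
      field_simp
      ring
    rwa [he] at h
  -- total
  have Htot := (((H1.add H2).add H3).add H4).sub (Hplus1.add Hplus2)
  have hzero_fun : (fun xy : ℕ × ℕ =>
      lam * (qPS p xy.1 * qPS p xy.2)
        + 2 * lam * (p xy.1 (xy.2 + 1) + p (xy.1 + 1) xy.2 - 2 * aPS p xy)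
        + bPS p (xy.1 + 1, xy.2) + bPS' p (xy.1, xy.2 + 1)
        - (aPS p xy * (1 + hPS p (xy.1 + 1)) + aPS p xy * (1 + hPS p (xy.2 + 1)))) =
      fun _ : ℕ × ℕ => (0 : ℝ) := by
    funext xy
    rw [← hfix (xy.1 + 1) (xy.2 + 1) (Nat.le_add_left 1 _) (Nat.le_add_left 1 _)]
    simp only [RPS, Nat.add_sub_cancel, bPS, bPS', aPS]
    push_cast
    ring
  rw [hzero_fun] at Htot
  have hval : (0 : ℝ) = lam + 0 + A + A - (A + t + (A + t)) := hasSum_zero.unique Htot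
  have h2t : 2 * t = lam := by linarith
  constructor
  · rw [Hu.tsum_eq]; exact h2t
  · rw [q0, h2t]
end

section
/- Let 0 < λ < 1 and let π be an admissible pair configuration which in addition factorizes as π(x,y) = π(x)·π(y)/S for all x,y ≥ 1, where S := ∑_{z≥1} π(z). Set q̄ := 2S. Then for every x ≥ 1, (2/x)·∑_{y≥1} R(x,y) = 2λ·(q(x−1) − q(x)) + q(x+1) − q(x) + ((1 − q(0))/q̄)·((x+1)·q(x+1) − x·q(x)); that is, under the independence assumption the pair drift collapses to the mean-field drift with d = 2. -/
open scoped BigOperators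

/-- Auxiliary function `F(z) = c·z·π(z+1) + π(z+1) − π(z+1)/(z+1)`. -/
noncomputable def auxF (p : ℕ → ℕ → ℝ) (c : ℝ) (z : ℕ) : ℝ :=
  c * ((z : ℝ) * rowSum p (z + 1)) + rowSum p (z + 1) - rowSum p (z + 1) / ((z : ℝ) + 1)

set_option maxHeartbeats 2000000 in
theorem ps_pair_drift_collapses_to_mean_field
    (lam : ℝ) (hlam0 : 0 < lam) (hlam1 : lam < 1)
    (p : ℕ → ℕ → ℝ) (hp : AdmissiblePair p)
    (hfac : ∀ x y : ℕ, 1 ≤ x → 1 ≤ y →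
      p x y = rowSum p x * rowSum p y / (∑' z : ℕ, rowSum p (z + 1))) :
    ∀ x : ℕ, 1 ≤ x →
      Summable (fun y : ℕ => RPS lam p x (y + 1)) ∧
      (2 / (x : ℝ)) * (∑' y : ℕ, RPS lam p x (y + 1)) =
        2 * lam * (qPS p (x - 1) - qPS p x) + qPS p (x + 1) - qPS p x +
          (1 - qPS p 0) / (2 * ∑' z : ℕ, rowSum p (z + 1)) *
            (((x : ℝ) + 1) * qPS p (x + 1) - (x : ℝ) * qPS p x) := by
  obtain ⟨hnn, hsymm, h0y, hx0, hpairsum, hpos⟩ := hp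
  intro x hx
  obtain ⟨n, rfl⟩ : ∃ n, x = n + 1 := ⟨x - 1, (Nat.succ_pred_eq_of_pos hx).symm⟩
  set S : ℝ := ∑' z : ℕ, rowSum p (z + 1) with hSdef
  have hπnn : ∀ m, 0 ≤ rowSum p m := fun m => tsum_nonneg fun y => hnn m (y + 1)
  have hπ0 : rowSum p 0 = 0 := by simp [rowSum, h0y]
  -- summability of rows
  have hrow : ∀ m : ℕ, Summable fun y => p m (y + 1) := by
    intro m
    match m with
    | 0 => exact summable_zero.congr fun y => (h0y (y + 1)).symm
    | (m + 1) =>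
      have h1 : Summable fun y => ((m : ℝ) + 1) * p (m + 1) (y + 1) := hpairsum.prod_factor m
      have h2 := h1.mul_left (((m : ℝ) + 1)⁻¹)
      refine h2.congr fun y => ?_
      have hm : ((m : ℝ) + 1) ≠ 0 := by positivity
      field_simp
  -- basic summable families
  have hMsum : Summable fun z : ℕ => ((z : ℝ) + 1) * rowSum p (z + 1) := by
    have h0 : (0 : (ℕ × ℕ) → ℝ) ≤ fun xy => ((xy.1 : ℝ) + 1) * p (xy.1 + 1) (xy.2 + 1) := by
      intro xy
      have := hnn (xy.1 + 1) (xy.2 + 1)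
      positivity
    have h2 := ((summable_prod_of_nonneg h0).mp hpairsum).2
    refine h2.congr fun z => ?_
    simp only [rowSum, tsum_mul_left]
  have hesum : Summable fun z : ℕ => rowSum p (z + 1) := by
    refine hMsum.of_nonneg_of_le (fun z => hπnn _) fun z => ?_
    nlinarith [hπnn (z + 1), (Nat.cast_nonneg z : (0 : ℝ) ≤ (z : ℝ))]
  have htsum : Summable fun z : ℕ => rowSum p (z + 1) / ((z : ℝ) + 1) := by
    refine hesum.of_nonneg_of_le (fun z => div_nonneg (hπnn _) (by positivity)) fun z => ?_
    exact div_le_self (hπnn _) (by nlinarith [(Nat.cast_nonneg z : (0 : ℝ) ≤ (z : ℝ))])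
  have hmsum : Summable fun z : ℕ => (z : ℝ) * rowSum p (z + 1) :=
    (hMsum.sub hesum).congr fun z => by ring
  set T : ℝ := ∑' z : ℕ, rowSum p (z + 1) / ((z : ℝ) + 1) with hTdef
  set Mm : ℝ := ∑' z : ℕ, (z : ℝ) * rowSum p (z + 1) with hMdef
  have hSpos : 0 < S := by
    have h1 := Summable.le_tsum hesum 0 (fun j _ => hπnn _)
    simpa using lt_of_lt_of_le (hpos 1 le_rfl) h1
  have hSne : S ≠ 0 := ne_of_gt hSpos
  set c : ℝ := T / S with hcdef
  -- values of hPS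
  have hh : ∀ m : ℕ, hPS p (m + 1) = (m : ℝ) * c := by
    intro m
    have hπm : rowSum p (m + 1) ≠ 0 := ne_of_gt (hpos (m + 1) (by omega))
    have hfun : (fun y : ℕ => p (m + 1) (y + 1) / (((y : ℝ) + 1) * rowSum p (m + 1)))
        = fun y => S⁻¹ * (rowSum p (y + 1) / ((y : ℝ) + 1)) := by
      funext y
      rw [hfac (m + 1) (y + 1) (by omega) (by omega)]
      have hy : ((y : ℝ) + 1) ≠ 0 := by positivity
      field_simp
    rw [hPS, hfun, tsum_mul_left, ← hTdef, hcdef]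
    push_cast
    field_simp
    ring
  -- values of qPS
  have hq0 : qPS p 0 = 1 - 2 * T := by
    rw [qPS, if_pos rfl, hTdef]
    congr 1
    rw [← tsum_mul_left]
    congr 1
    funext z
    ring
  have hqsucc : ∀ m : ℕ, qPS p (m + 1) = 2 * rowSum p (m + 1) / ((m : ℝ) + 1) := by
    intro m
    rw [qPS, if_neg (by omega)]
    push_cast
    ring
  have hqS : Summable (qPS p) := by
    rw [← summable_nat_add_iff 1]
    refine (htsum.mul_left 2).congr fun m => ?_
    rw [hqsucc m]
    ring
  have hq1 : ∑' z : ℕ, qPS p z = 1 := by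
    rw [Summable.tsum_eq_zero_add hqS, hq0]
    have h2 : ∑' z : ℕ, qPS p (z + 1) = 2 * T := by
      rw [hTdef, ← tsum_mul_left]
      exact tsum_congr fun z => by rw [hqsucc z]; ring
    rw [h2]
    ring
  -- summability of auxF
  have hFsum : Summable (auxF p c) :=
    ((hmsum.mul_left c).add hesum).sub htsum
  have hFsum1 : Summable fun z : ℕ => auxF p c (z + 1) := (summable_nat_add_iff 1).mpr hFsum
  have hF0 : auxF p c 0 = 0 := by simp [auxF]
  have htF1 : ∑' z : ℕ, auxF p c (z + 1) = c * Mm + S - T := by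
    have h1 : ∑' z : ℕ, auxF p c z = c * Mm + S - T := by
      unfold auxF
      rw [Summable.tsum_sub ((hmsum.mul_left c).add hesum) htsum,
        Summable.tsum_add (hmsum.mul_left c) hesum, tsum_mul_left, ← hMdef, ← hSdef, ← hTdef]
    rw [Summable.tsum_eq_zero_add hFsum] at h1
    rw [hF0, zero_add] at h1
    exact h1
  -- pointwise identity
  have hrow1 : Summable fun y : ℕ => p (n + 1) y := (summable_nat_add_iff 1).mp (hrow (n + 1))
  have hRG : ∀ y : ℕ, RPS lam p (n + 1) (y + 1) =
      (lam * qPS p n) * qPS p y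
      + (2 * lam) * p n (y + 1)
      + (2 * lam) * p (n + 1) y
      + (-(4 * lam) * (rowSum p (n + 1) / S)
          + (rowSum p (n + 2) / S) * (((n : ℝ) + 1) * c + ((n : ℝ) + 1) / ((n : ℝ) + 2))
          - (rowSum p (n + 1) / S) * (2 + (n : ℝ) * c)) * rowSum p (y + 1)
      + (rowSum p (n + 1) / S) * auxF p c (y + 1)
      + (-(rowSum p (n + 1) / S * c)) * ((y : ℝ) * rowSum p (y + 1)) := by
    intro y
    have e1 : p (n + 1) (y + 1) = rowSum p (n + 1) * rowSum p (y + 1) / S :=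
      hfac _ _ (by omega) (by omega)
    have e2 : p (n + 1 + 1) (y + 1) = rowSum p (n + 1 + 1) * rowSum p (y + 1) / S :=
      hfac _ _ (by omega) (by omega)
    have e3 : p (n + 1) (y + 1 + 1) = rowSum p (n + 1) * rowSum p (y + 1 + 1) / S :=
      hfac _ _ (by omega) (by omega)
    have hn12 : (n + 1 + 1 : ℕ) = n + 2 := rfl
    have hy12 : (y + 1 + 1 : ℕ) = y + 2 := rfl
    rw [RPS]
    simp only [Nat.add_sub_cancel]
    rw [e1, e2, e3, hh (n + 1), hh (y + 1), hh n, hh y]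
    rw [hn12, hy12]
    unfold auxF
    have hy2 : ((y : ℝ) + 2) ≠ 0 := by positivity
    have hn2 : ((n : ℝ) + 2) ≠ 0 := by positivity
    push_cast
    field_simp
    ring
  -- summability of each piece
  have S1 : Summable fun y : ℕ => (lam * qPS p n) * qPS p y := hqS.mul_left _
  have S2 : Summable fun y : ℕ => (2 * lam) * p n (y + 1) := (hrow n).mul_left _
  have S3 : Summable fun y : ℕ => (2 * lam) * p (n + 1) y := hrow1.mul_left _
  have S4 : Summable fun y : ℕ =>
      (-(4 * lam) * (rowSum p (n + 1) / S)
        + (rowSum p (n + 2) / S) * (((n : ℝ) + 1) * c + ((n : ℝ) + 1) / ((n : ℝ) + 2))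
        - (rowSum p (n + 1) / S) * (2 + (n : ℝ) * c)) * rowSum p (y + 1) :=
    hesum.mul_left _
  have S5 : Summable fun y : ℕ => (rowSum p (n + 1) / S) * auxF p c (y + 1) :=
    hFsum1.mul_left _
  have S6 : Summable fun y : ℕ =>
      (-(rowSum p (n + 1) / S * c)) * ((y : ℝ) * rowSum p (y + 1)) := hmsum.mul_left _
  have hfe : (fun y : ℕ => RPS lam p (n + 1) (y + 1)) = _ := funext hRG
  have hsumG : Summable fun y : ℕ => RPS lam p (n + 1) (y + 1) := by
    rw [hfe]
    exact ((((S1.add S2).add S3).add S4).add S5).add S6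
  refine ⟨hsumG, ?_⟩
  -- value of the tsum
  have htG : ∑' y : ℕ, RPS lam p (n + 1) (y + 1) =
      (lam * qPS p n) * 1 + (2 * lam) * rowSum p n + (2 * lam) * rowSum p (n + 1)
      + (-(4 * lam) * (rowSum p (n + 1) / S)
          + (rowSum p (n + 2) / S) * (((n : ℝ) + 1) * c + ((n : ℝ) + 1) / ((n : ℝ) + 2))
          - (rowSum p (n + 1) / S) * (2 + (n : ℝ) * c)) * S
      + (rowSum p (n + 1) / S) * (c * Mm + S - T)
      + (-(rowSum p (n + 1) / S * c)) * Mm := by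
    rw [hfe,
      Summable.tsum_add ((((S1.add S2).add S3).add S4).add S5) S6,
      Summable.tsum_add (((S1.add S2).add S3).add S4) S5,
      Summable.tsum_add ((S1.add S2).add S3) S4,
      Summable.tsum_add (S1.add S2) S3,
      Summable.tsum_add S1 S2,
      tsum_mul_left, tsum_mul_left, tsum_mul_left, tsum_mul_left, tsum_mul_left, tsum_mul_left]
    rw [hq1, htF1, ← hMdef, ← hSdef]
    have t1 : ∑' y : ℕ, p n (y + 1) = rowSum p n := rfl
    have t2 : ∑' y : ℕ, p (n + 1) y = rowSum p (n + 1) := by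
      rw [Summable.tsum_eq_zero_add hrow1, hx0, zero_add]
      rfl
    rw [t1, t2]
  rw [htG]
  -- final algebra
  have hQ : qPS p n + 2 * rowSum p n = ((n : ℝ) + 1) * qPS p n := by
    match n with
    | 0 => rw [hπ0]; push_cast; ring
    | (m + 1) =>
      rw [hqsucc m]
      have hm : ((m : ℝ) + 1) ≠ 0 := by positivity
      push_cast
      field_simp
      ring
  have hπn : 2 * rowSum p n = (n : ℝ) * qPS p n := by linarith
  simp only [Nat.add_sub_cancel]
  rw [hqsucc n, hqsucc (n + 1), hq0, hcdef]
  have hrown : rowSum p n = (n : ℝ) * qPS p n / 2 := by linarith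
  rw [hrown]
  have hn1 : ((n : ℝ) + 1) ≠ 0 := by positivity
  have hn2 : ((n : ℝ) + 2) ≠ 0 := by positivity
  push_cast
  field_simp
  ring
end
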